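/- arXiv:2006.09877 — 4 statements merged into one kernel-verified Lean document; each statement's English description precedes it below -/
import Mathlib

section
/- Let G be a trigraph and d a natural number. (1) If G admits a d-sequence, then G admits a parallel d-sequence. (2) If G admits a parallel d-sequence, then G admits a (2d+1)-sequence. -/
/-- A trigraph: a finite vertex set with disjoint black and red edge sets. -/
structure Trigraph (V : Type*) where
  verts : Finset V
  black : V → V → Prop
  red : V → V → Prop
  black_symm : ∀ u v, black u v → black v u
  red_symm : ∀ u v, red u v → red v u
  black_irrefl : ∀ u, ¬ black u u
  red_irrefl : ∀ u, ¬ red u u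
  black_red_disjoint : ∀ u v, black u v → ¬ red u v
  black_mem : ∀ u v, black u v → u ∈ verts ∧ v ∈ verts
  red_mem : ∀ u v, red u v → u ∈ verts ∧ v ∈ verts

namespace Trigraph

variable {V : Type*} [DecidableEq V]

/-- The red degree of a vertex. -/
noncomputable def redDeg (G : Trigraph V) (x : V) : ℕ := {y | G.red x y}.ncard

/-- `G` is a `d`-trigraph: every vertex is incident to at most `d` red edges. -/
def RedDegLE (G : Trigraph V) (d : ℕ) : Prop := ∀ x, G.redDeg x ≤ d

/-- `G'` is obtained from `G` by contracting the two distinct vertices `u` and `v`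
(the contracted vertex is represented by `u`, and `v` is deleted). -/
def IsContractionAt (G G' : Trigraph V) (u v : V) : Prop :=
  u ∈ G.verts ∧ v ∈ G.verts ∧ u ≠ v ∧
  G'.verts = G.verts.erase v ∧
  (∀ x y, x ≠ u → y ≠ u → (G'.black x y ↔ (G.black x y ∧ x ≠ v ∧ y ≠ v))) ∧
  (∀ x y, x ≠ u → y ≠ u → (G'.red x y ↔ (G.red x y ∧ x ≠ v ∧ y ≠ v))) ∧
  (∀ x, x ≠ u → x ≠ v → (G'.black u x ↔ (G.black u x ∧ G.black v x))) ∧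
  (∀ x, x ≠ u → x ≠ v →
    (G'.red u x ↔
      ((G.black u x ∨ G.red u x ∨ G.black v x ∨ G.red v x) ∧ ¬ (G.black u x ∧ G.black v x))))

/-- `G'` is obtained from `G` by contracting some pair of vertices. -/
def IsContraction (G G' : Trigraph V) : Prop := ∃ u v, IsContractionAt G G' u v

/-- `G` admits a `d`-sequence: a sequence `G = G_n, …, G_1` of `d`-trigraphs, each obtained
from the previous one by a contraction, ending in a one-vertex trigraph. -/
def HasSeq (G : Trigraph V) (d : ℕ) : Prop :=
  ∃ f : ℕ → Trigraph V,
    f G.verts.card = G ∧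
    (∀ i, 1 ≤ i → i < G.verts.card → IsContraction (f (i + 1)) (f i)) ∧
    (∀ i, 1 ≤ i → i ≤ G.verts.card → (f i).RedDegLE d)

/-- The twin-width of a trigraph: the least `d` such that it admits a `d`-sequence. -/
noncomputable def tww (G : Trigraph V) : ℕ := sInf {d | G.HasSeq d}

end Trigraph

/-- The trigraph induced by a simple graph `G` on the vertex set `s`: all edges black. -/
def SimpleGraph.toTrigraphOn {V : Type*} (G : SimpleGraph V) (s : Finset V) : Trigraph V where
  verts := s
  black u v := G.Adj u v ∧ u ∈ s ∧ v ∈ s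
  red _ _ := False
  black_symm := fun _ _ ⟨h, hu, hv⟩ => ⟨h.symm, hv, hu⟩
  red_symm := fun _ _ h => h.elim
  black_irrefl := fun u h => G.loopless.irrefl u h.1
  red_irrefl := fun _ h => h
  black_red_disjoint := fun _ _ _ h => h
  black_mem := fun _ _ ⟨_, hu, hv⟩ => ⟨hu, hv⟩
  red_mem := fun _ _ h => h.elim

/-- The trigraph associated to a finite simple graph: all edges black. -/
def SimpleGraph.toTrigraph {V : Type*} [Fintype V] (G : SimpleGraph V) : Trigraph V :=
  G.toTrigraphOn Finset.univ

namespace Trigraph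

variable {V : Type*} [DecidableEq V]

/-- `G'` is obtained from `G` by a parallel contraction: the successive contraction of a
(nonempty) set of pairwise disjoint pairs of vertices. -/
def IsParallelContraction (G G' : Trigraph V) : Prop :=
  ∃ (l : List (V × V)) (f : ℕ → Trigraph V),
    l ≠ [] ∧
    (l.map Prod.fst ++ l.map Prod.snd).Nodup ∧
    f 0 = G ∧ f l.length = G' ∧
    ∀ i (h : i < l.length), IsContractionAt (f i) (f (i + 1)) (l.get ⟨i, h⟩).1 (l.get ⟨i, h⟩).2

/-- `G` admits a parallel `d`-sequence of length `k`: a sequence `G = G_k, …, G_1` of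
`d`-trigraphs, each obtained from the previous one by a parallel contraction, ending in a
one-vertex trigraph. -/
def HasParallelSeq (G : Trigraph V) (d k : ℕ) : Prop :=
  ∃ f : ℕ → Trigraph V,
    f 0 = G ∧ (f k).verts.card = 1 ∧
    (∀ i, i ≤ k → (f i).RedDegLE d) ∧
    (∀ i, i < k → IsParallelContraction (f i) (f (i + 1)))

end Trigraph


namespace TwwAux

variable {V : Type*} [DecidableEq V]

open Trigraph

/-- One contraction step's action on vertices: the deleted vertex `p.2` is sent to `p.1`. -/
def repStep (p : V × V) (x : V) : V := if x = p.2 then p.1 else x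

/-- The representative of a vertex after performing a list of contractions. -/
def repL : List (V × V) → V → V
  | [], x => x
  | p :: t, x => repL t (repStep p x)

/-- Red edges persist through a contraction, after renaming `v` to `u`,
provided the edge is not the contracted pair itself. -/
lemma step_red {A B : Trigraph V} {u v : V} (h : A.IsContractionAt B u v)
    {x y : V} (hr : A.red x y) (hxy : ¬((x = u ∨ x = v) ∧ (y = u ∨ y = v))) :
    B.red (if x = v then u else x) (if y = v then u else y) := by
  obtain ⟨hu, hv, huv, hverts, hb, hrd, hbu, hru⟩ := h
  by_cases hx : x = u ∨ x = v
  · have hy : ¬(y = u ∨ y = v) := fun h' => hxy ⟨hx, h'⟩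
    push_neg at hy
    have h1 : B.red u y := by
      rw [hru y hy.1 hy.2]
      rcases hx with rfl | rfl
      · exact ⟨Or.inr (Or.inl hr), fun hc => A.black_red_disjoint _ _ hc.1 hr⟩
      · exact ⟨Or.inr (Or.inr (Or.inr hr)), fun hc => A.black_red_disjoint _ _ hc.2 hr⟩
    have hxv : (if x = v then u else x) = u := by
      rcases hx with rfl | rfl <;> simp
    rw [hxv, if_neg hy.2]
    exact h1
  · push_neg at hx
    by_cases hy : y = u ∨ y = v
    · have hr' := A.red_symm _ _ hr
      have h1 : B.red u x := by
        rw [hru x hx.1 hx.2]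
        rcases hy with rfl | rfl
        · exact ⟨Or.inr (Or.inl hr'), fun hc => A.black_red_disjoint _ _ hc.1 hr'⟩
        · exact ⟨Or.inr (Or.inr (Or.inr hr')), fun hc => A.black_red_disjoint _ _ hc.2 hr'⟩
      have hyv : (if y = v then u else y) = u := by
        rcases hy with rfl | rfl <;> simp
      rw [hyv, if_neg hx.2]
      exact B.red_symm _ _ h1
    · push_neg at hy
      rw [if_neg hx.2, if_neg hy.2]
      exact (hrd x y hx.1 hy.1).mpr ⟨hr, hx.2, hy.2⟩

/-- The nodup hypothesis passes to the tail of the list. -/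
lemma nodup_tail {p : V × V} {t : List (V × V)}
    (h : (((p :: t).map Prod.fst) ++ ((p :: t).map Prod.snd)).Nodup) :
    ((t.map Prod.fst) ++ (t.map Prod.snd)).Nodup := by
  simp only [List.map_cons] at h
  exact (List.Sublist.append (List.sublist_cons_self _ _) (List.sublist_cons_self _ _)).nodup h

lemma mem_comp_unique {l : List (V × V)}
    (hnd : ((l.map Prod.fst) ++ (l.map Prod.snd)).Nodup)
    {p q : V × V} (hp : p ∈ l) (hq : q ∈ l) {x : V}
    (hxp : x = p.1 ∨ x = p.2) (hxq : x = q.1 ∨ x = q.2) : p = q := by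
  rw [List.nodup_append'] at hnd
  obtain ⟨h1, h2, h3⟩ := hnd
  rcases hxp with rfl | rfl <;> rcases hxq with h | h
  · exact List.inj_on_of_nodup_map h1 hp hq h
  · exact absurd (h ▸ List.mem_map_of_mem (f := Prod.snd) hq)
      (h3 (List.mem_map_of_mem (f := Prod.fst) hp))
  · exact absurd (List.mem_map_of_mem (f := Prod.snd) hp)
      (h3 (h ▸ List.mem_map_of_mem (f := Prod.fst) hq))
  · exact List.inj_on_of_nodup_map h2 hp hq h

lemma fst_ne_snd {l : List (V × V)}
    (hnd : ((l.map Prod.fst) ++ (l.map Prod.snd)).Nodup)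
    {p : V × V} (hp : p ∈ l) : p.1 ≠ p.2 := by
  rw [List.nodup_append'] at hnd
  intro h
  exact hnd.2.2 (List.mem_map_of_mem (f := Prod.fst) hp) (h ▸ List.mem_map_of_mem (f := Prod.snd) hp)

lemma repL_of_not_mem : ∀ {l : List (V × V)} {x : V},
    (∀ p ∈ l, ¬(x = p.1 ∨ x = p.2)) → repL l x = x
  | [], x, _ => rfl
  | p :: t, x, hx => by
    have h1 := hx p (List.mem_cons_self)
    have : repStep p x = x := if_neg (fun h => h1 (Or.inr h))
    rw [repL, this]
    exact repL_of_not_mem (fun q hq => hx q (List.mem_cons_of_mem _ hq))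

lemma repL_of_mem : ∀ {l : List (V × V)},
    ((l.map Prod.fst) ++ (l.map Prod.snd)).Nodup →
    ∀ {p : V × V}, p ∈ l → ∀ {x : V}, (x = p.1 ∨ x = p.2) → repL l x = p.1
  | [], _, p, hp, _, _ => absurd hp List.not_mem_nil
  | q :: t, hnd, p, hp, x, hx => by
    have hfst_not : ∀ r ∈ t, ¬(q.1 = r.1 ∨ q.1 = r.2) := by
      intro r hr hcomp
      have := mem_comp_unique hnd ((List.mem_cons_self : q ∈ q :: t)) (List.mem_cons_of_mem _ hr)
        (Or.inl rfl) hcomp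
      subst this
      rw [List.nodup_append] at hnd
      exact (List.nodup_cons.mp (by simpa only [List.map_cons] using hnd.1)).1 (List.mem_map_of_mem (f := Prod.fst) hr)
    rcases List.mem_cons.mp hp with rfl | hpt
    · have hne : p.1 ≠ p.2 := fst_ne_snd hnd (List.mem_cons_self)
      rcases hx with rfl | rfl
      · rw [repL, repStep, if_neg hne]
        exact repL_of_not_mem (fun r hr => hfst_not r hr)
      · rw [repL, repStep, if_pos rfl]
        exact repL_of_not_mem (fun r hr => hfst_not r hr)
    · have hxq : ¬(x = q.1 ∨ x = q.2) := by
        intro hcomp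
        have := mem_comp_unique hnd (List.mem_cons_of_mem _ hpt) ((List.mem_cons_self : q ∈ q :: t))
          hx hcomp
        subst this
        exact hfst_not p hpt (by tauto)
      have : repStep q x = x := if_neg (fun h => hxq (Or.inr h))
      rw [repL, this]
      exact repL_of_mem (nodup_tail hnd) hpt hx

lemma repL_fiber {l : List (V × V)}
    (hnd : ((l.map Prod.fst) ++ (l.map Prod.snd)).Nodup)
    {y b : V} (h : repL l y = b) :
    y = b ∨ ∃ p ∈ l, p.1 = b ∧ y = p.2 := by
  by_cases hy : ∃ p ∈ l, y = p.1 ∨ y = p.2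
  · obtain ⟨p, hp, hyp⟩ := hy
    have hrep := repL_of_mem hnd hp hyp
    rcases hyp with rfl | rfl
    · exact Or.inl (hrep ▸ h)
    · exact Or.inr ⟨p, hp, hrep ▸ h, rfl⟩
  · push_neg at hy
    left
    rw [← h]
    exact (repL_of_not_mem (fun p hp hc => (hc.elim (hy p hp).1 (hy p hp).2))).symm

end TwwAux

namespace TwwAux

variable {V : Type*} [DecidableEq V]

lemma persist : ∀ (l : List (V × V)) (g : ℕ → Trigraph V),
    ((l.map Prod.fst) ++ (l.map Prod.snd)).Nodup →
    (∀ i (h : i < l.length),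
      Trigraph.IsContractionAt (g i) (g (i + 1)) (l.get ⟨i, h⟩).1 (l.get ⟨i, h⟩).2) →
    ∀ {x y : V}, (g 0).red x y →
    (g l.length).red (repL l x) (repL l y) ∨
      ∃ p ∈ l, (x = p.1 ∨ x = p.2) ∧ (y = p.1 ∨ y = p.2)
  | [], g, _, _, x, y, hr => Or.inl hr
  | p :: t, g, hnd, hc, x, y, hr => by
    by_cases hxy : (x = p.1 ∨ x = p.2) ∧ (y = p.1 ∨ y = p.2)
    · exact Or.inr ⟨p, List.mem_cons_self, hxy⟩
    · have h0 := hc 0 (Nat.succ_pos _)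
      have hr1 : (g 1).red (repStep p x) (repStep p y) := step_red h0 hr hxy
      have hct : ∀ i (h : i < t.length),
          Trigraph.IsContractionAt (g (i + 1)) (g (i + 1 + 1))
            (t.get ⟨i, h⟩).1 (t.get ⟨i, h⟩).2 :=
        fun i h => hc (i + 1) (Nat.succ_lt_succ h)
      have hlift : ∀ {z : V} {q : V × V}, q ∈ t →
          (repStep p z = q.1 ∨ repStep p z = q.2) → (z = q.1 ∨ z = q.2) := by
        intro z q hq hcomp
        unfold repStep at hcomp
        split at hcomp
        · exfalso
          have := mem_comp_unique hnd ((List.mem_cons_self : p ∈ p :: t)) (List.mem_cons_of_mem _ hq)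
            (Or.inl rfl) hcomp
          subst this
          rw [List.nodup_append] at hnd
          exact (List.nodup_cons.mp (by simpa only [List.map_cons] using hnd.1)).1 (List.mem_map_of_mem (f := Prod.fst) hq)
        · exact hcomp
      rcases persist t (fun i => g (i + 1)) (nodup_tail hnd) hct hr1 with h | ⟨q, hq, hxq, hyq⟩
      · exact Or.inl h
      · exact Or.inr ⟨q, List.mem_cons_of_mem _ hq, hlift hq hxq, hlift hq hyq⟩

lemma deg_bound (l : List (V × V)) (g : ℕ → Trigraph V)
    (hnd : ((l.map Prod.fst) ++ (l.map Prod.snd)).Nodup)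
    (hc : ∀ i (h : i < l.length),
      Trigraph.IsContractionAt (g i) (g (i + 1)) (l.get ⟨i, h⟩).1 (l.get ⟨i, h⟩).2)
    {d : ℕ} (hB : (g l.length).RedDegLE d) :
    (g 0).RedDegLE (2 * d + 1) := by
  classical
  intro x
  set m := l.length with hm
  set ρ := repL l with hρ
  have hfinS : {y | (g 0).red x y}.Finite :=
    Set.Finite.subset (g 0).verts.finite_toSet (fun y hy => ((g 0).red_mem _ _ hy).2)
  have hfinT : {z | (g m).red (ρ x) z}.Finite :=
    Set.Finite.subset (g m).verts.finite_toSet (fun y hy => ((g m).red_mem _ _ hy).2)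
  set S := hfinS.toFinset with hS
  set T := hfinT.toFinset with hT
  have hTd : T.card ≤ d := by
    have h := hB (ρ x)
    rwa [Trigraph.redDeg, Set.ncard_eq_toFinset_card _ hfinT] at h
  have hdeg : (g 0).redDeg x = S.card :=
    Set.ncard_eq_toFinset_card _ hfinS
  rw [Trigraph.RedDegLE] at *
  rw [hdeg]
  -- split S
  set P : V → Prop := fun y => (g m).red (ρ x) (ρ y) with hP
  set Q : V → Prop := fun y => ∃ p ∈ l, (x = p.1 ∨ x = p.2) ∧ (y = p.1 ∨ y = p.2) with hQ
  have hsplit : S ⊆ S.filter P ∪ S.filter Q := by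
    intro y hy
    have hry : (g 0).red x y := by rwa [hS, Set.Finite.mem_toFinset] at hy
    rcases persist l g hnd hc hry with h | h
    · exact Finset.mem_union_left _ (Finset.mem_filter.mpr ⟨hy, h⟩)
    · exact Finset.mem_union_right _ (Finset.mem_filter.mpr ⟨hy, h⟩)
  have hQ1 : (S.filter Q).card ≤ 1 := by
    rw [Finset.card_le_one]
    intro a ha b hb
    obtain ⟨haS, p, hp, hxp, hap⟩ := Finset.mem_filter.mp ha
    obtain ⟨hbS, q, hq, hxq, hbq⟩ := Finset.mem_filter.mp hb
    have hpq : p = q := mem_comp_unique hnd hp hq hxp hxq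
    subst hpq
    have hra : (g 0).red x a := by rwa [hS, Set.Finite.mem_toFinset] at haS
    have hrb : (g 0).red x b := by rwa [hS, Set.Finite.mem_toFinset] at hbS
    have hxa : x ≠ a := fun h => (g 0).red_irrefl a (h ▸ hra)
    have hxb : x ≠ b := fun h => (g 0).red_irrefl b (h ▸ hrb)
    have hne : p.1 ≠ p.2 := fst_ne_snd hnd hp
    rcases hxp with rfl | rfl
    · rcases hap with rfl | rfl
      · exact absurd rfl hxa
      · rcases hbq with rfl | rfl
        · exact absurd rfl hxb
        · rfl
    · rcases hap with rfl | rfl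
      · rcases hbq with rfl | rfl
        · rfl
        · exact absurd rfl hxb
      · exact absurd rfl hxa
  have hP2 : (S.filter P).card ≤ 2 * T.card := by
    apply Finset.card_le_mul_card_image_of_maps_to (f := ρ) (t := T)
    · intro y hy
      rw [hT, Set.Finite.mem_toFinset]
      exact (Finset.mem_filter.mp hy).2
    · intro b _
      by_cases hex : ∃ p ∈ l, p.1 = b
      · obtain ⟨p, hp, hpb⟩ := hex
        have hsub : {y ∈ S.filter P | ρ y = b} ⊆ insert b {p.2} := by
          intro y hy
          have hyb : ρ y = b := (Finset.mem_filter.mp hy).2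
          rcases repL_fiber hnd hyb with rfl | ⟨q, hq, hqb, rfl⟩
          · exact Finset.mem_insert_self _ _
          · have : q = p := mem_comp_unique hnd hq hp (Or.inl rfl) (Or.inl (hpb ▸ hqb))
            subst this
            exact Finset.mem_insert_of_mem (Finset.mem_singleton_self _)
        calc {y ∈ S.filter P | ρ y = b}.card ≤ (insert b {p.2} : Finset V).card :=
              Finset.card_le_card hsub
          _ ≤ 2 := by
              apply le_trans (Finset.card_insert_le _ _)
              simp
      · have hsub : {y ∈ S.filter P | ρ y = b} ⊆ {b} := by
          intro y hy
          have hyb : ρ y = b := (Finset.mem_filter.mp hy).2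
          rcases repL_fiber hnd hyb with rfl | ⟨q, hq, hqb, rfl⟩
          · exact Finset.mem_singleton_self _
          · exact absurd ⟨q, hq, hqb⟩ hex
        calc {y ∈ S.filter P | ρ y = b}.card ≤ ({b} : Finset V).card :=
              Finset.card_le_card hsub
          _ ≤ 2 := by simp
  calc S.card ≤ (S.filter P ∪ S.filter Q).card := Finset.card_le_card hsplit
    _ ≤ (S.filter P).card + (S.filter Q).card := Finset.card_union_le _ _
    _ ≤ 2 * T.card + 1 := Nat.add_le_add hP2 hQ1
    _ ≤ 2 * d + 1 := by omega

end TwwAux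

namespace TwwAux

variable {V : Type*} [DecidableEq V]

lemma card_contract {A B : Trigraph V} (h : A.IsContraction B) :
    A.verts.card = B.verts.card + 1 := by
  obtain ⟨u, v, hu, hv, huv, hverts, _⟩ := h
  have h1 : 1 ≤ A.verts.card := Finset.card_pos.mpr ⟨v, hv⟩
  rw [hverts, Finset.card_erase_of_mem hv]
  omega

lemma redDegLE_mono {A : Trigraph V} {d d' : ℕ} (h : d ≤ d') (hA : A.RedDegLE d) :
    A.RedDegLE d' := fun x => le_trans (hA x) h

lemma single_glue {A B : Trigraph V} {D : ℕ} (h : A.IsContraction B)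
    (hA : A.RedDegLE D) (hB : B.HasSeq D) : A.HasSeq D := by
  obtain ⟨f, hf0, hfc, hfd⟩ := hB
  have hcard := card_contract h
  set cB := B.verts.card with hcB
  refine ⟨fun i => if i = cB + 1 then A else f i, by rw [hcard]; simp, ?_, ?_⟩
  · intro i h1 hi
    rw [hcard] at hi
    beta_reduce
    by_cases he : i = cB
    · subst he
      rw [if_pos rfl, if_neg (by omega)]
      exact hf0 ▸ h
    · rw [if_neg (by omega), if_neg (by omega)]
      exact hfc i h1 (by omega)
  · intro i h1 hi
    rw [hcard] at hi
    beta_reduce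
    by_cases he : i = cB + 1
    · rw [if_pos he]; exact hA
    · rw [if_neg he]; exact hfd i h1 (by omega)

lemma chain_glue : ∀ (m : ℕ) (g : ℕ → Trigraph V) {D : ℕ},
    (∀ i, i < m → (g i).IsContraction (g (i + 1))) →
    (∀ i, i ≤ m → (g i).RedDegLE D) →
    (g m).HasSeq D → (g 0).HasSeq D
  | 0, g, _, _, _, hB => hB
  | m + 1, g, D, hc, hd, hB => by
    have h1 : (g 1).HasSeq D :=
      chain_glue m (fun i => g (i + 1))
        (fun i hi => hc (i + 1) (Nat.succ_lt_succ hi))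
        (fun i hi => hd (i + 1) (Nat.succ_le_succ hi)) hB
    exact single_glue (hc 0 (Nat.succ_pos _)) (hd 0 (Nat.zero_le _)) h1

lemma single_parallel {A B : Trigraph V} (h : A.IsContraction B) :
    A.IsParallelContraction B := by
  obtain ⟨u, v, hat⟩ := h
  refine ⟨[(u, v)], fun i => if i = 0 then A else B, by simp, ?_, by simp, by simp, ?_⟩
  · simpa using hat.2.2.1
  · intro i hi
    have h0 : i = 0 := by simp only [List.length_cons, List.length_nil] at hi; omega
    subst h0
    simpa using hat

end TwwAux

/-- (1) if a (nonempty) trigraph admits a `d`-sequence then it admits a parallel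
`d`-sequence; (2) if it admits a parallel `d`-sequence then it admits a `(2d+1)`-sequence. -/
theorem parallel_sequences_equivalence {V : Type*} [DecidableEq V] (G : Trigraph V) (d : ℕ)
    (hG : G.verts.Nonempty) :
    (G.HasSeq d → ∃ k, G.HasParallelSeq d k) ∧
    ((∃ k, G.HasParallelSeq d k) → G.HasSeq (2 * d + 1)) := by
  constructor
  · rintro ⟨f, hfG, hfc, hfd⟩
    set n := G.verts.card with hn
    have hn1 : 1 ≤ n := Finset.card_pos.mpr hG
    have hcard : ∀ j, j ≤ n - 1 → (f (n - j)).verts.card = n - j := by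
      intro j
      induction j with
      | zero => intro _; simpa using congrArg (fun H => H.verts.card) hfG
      | succ j ih =>
        intro hj
        have hj' : j ≤ n - 1 := by omega
        have h1 : 1 ≤ n - (j + 1) := by omega
        have h2 : n - (j + 1) < n := by omega
        have hc := TwwAux.card_contract (hfc (n - (j + 1)) h1 h2)
        have he : n - (j + 1) + 1 = n - j := by omega
        rw [he] at hc
        rw [ih hj'] at hc
        omega
    refine ⟨n - 1, fun i => f (n - i), by simpa using hfG, ?_, ?_, ?_⟩
    · rw [hcard (n - 1) le_rfl]; omega
    · intro i hi
      exact hfd (n - i) (by omega) (by omega)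
    · intro i hi
      have h1 : 1 ≤ n - i - 1 := by omega
      have h2 : n - i - 1 < n := by omega
      have hc := hfc (n - i - 1) h1 h2
      have he1 : n - i - 1 + 1 = n - i := by omega
      have he2 : n - (i + 1) = n - i - 1 := by omega
      rw [he1] at hc
      beta_reduce
      rw [he2]
      exact TwwAux.single_parallel hc
  · rintro ⟨k, f, hf0, hfk, hfd, hfp⟩
    suffices h : ∀ j, j ≤ k → (f (k - j)).HasSeq (2 * d + 1) by
      have := h k le_rfl
      rwa [Nat.sub_self, hf0] at this
    intro j
    induction j with
    | zero =>
      intro _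
      rw [Nat.sub_zero]
      refine ⟨fun _ => f k, rfl, ?_, ?_⟩
      · intro i h1 h2
        rw [hfk] at h2
        omega
      · intro i _ _
        exact TwwAux.redDegLE_mono (by omega) (hfd k le_rfl)
    | succ j ih =>
      intro hj
      have hj' : j ≤ k := by omega
      have hlt : k - (j + 1) < k := by omega
      have hp := hfp (k - (j + 1)) hlt
      have hstep : k - (j + 1) + 1 = k - j := by omega
      rw [hstep] at hp
      obtain ⟨l, g, hlne, hnd, hg0, hgm, hgc⟩ := hp
      have hdeg : ∀ i, i ≤ l.length → (g i).RedDegLE (2 * d + 1) := by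
        intro i hi
        have hndi : (((l.drop i).map Prod.fst) ++ ((l.drop i).map Prod.snd)).Nodup :=
          (List.Sublist.append ((l.drop_sublist i).map _) ((l.drop_sublist i).map _)).nodup hnd
        have hci : ∀ s (h : s < (l.drop i).length),
            Trigraph.IsContractionAt ((fun s => g (i + s)) s) ((fun s => g (i + s)) (s + 1))
              ((l.drop i).get ⟨s, h⟩).1 ((l.drop i).get ⟨s, h⟩).2 := by
          intro s hs
          have hs' : i + s < l.length := by
            rw [List.length_drop] at hs; omega
          have hget : (l.drop i).get ⟨s, hs⟩ = l.get ⟨i + s, hs'⟩ := by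
            simp [List.get_eq_getElem, List.getElem_drop]
          rw [hget]
          have := hgc (i + s) hs'
          simpa [Nat.add_assoc] using this
        have hBd : ((fun s => g (i + s)) (l.drop i).length).RedDegLE d := by
          have he : i + (l.drop i).length = l.length := by
            rw [List.length_drop]; omega
          simp only [he]
          rw [hgm]
          exact hfd (k - j) (by omega)
        have := TwwAux.deg_bound (l.drop i) (fun s => g (i + s)) hndi hci hBd
        simpa using this
      have hchain : (g 0).HasSeq (2 * d + 1) := by
        apply TwwAux.chain_glue l.length g
        · intro i hi
          exact ⟨_, _, hgc i hi⟩
        · exact hdeg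
        · rw [hgm]
          exact ih hj'
      rwa [hg0] at hchain
end

section
/- For all finite nonempty simple graphs G and H, the twin-width of the strong product satisfies tww(G ⊠ H) ≤ max{ tww(G)·(Δ(H)+1) + 2Δ(H), tww(H) + Δ(H) }, where Δ(H) is the maximum degree of H. -/
/-- The strong product of two simple graphs. -/
def strongProd {V W : Type*} (G : SimpleGraph V) (H : SimpleGraph W) : SimpleGraph (V × W) where
  Adj a b := a ≠ b ∧ (a.1 = b.1 ∨ G.Adj a.1 b.1) ∧ (a.2 = b.2 ∨ H.Adj a.2 b.2)
  symm := by
    constructor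
    rintro a b ⟨hne, h1, h2⟩
    exact ⟨hne.symm, h1.imp Eq.symm (fun h => h.symm), h2.imp Eq.symm (fun h => h.symm)⟩
  loopless := ⟨fun a h => h.1 rfl⟩

/-- The maximum degree of a finite simple graph. -/
noncomputable def maxDeg {W : Type*} [Fintype W] (H : SimpleGraph W) : ℕ :=
  Finset.univ.sup fun v => {u | H.Adj v u}.ncard

section AuxDev
set_option linter.unusedSectionVars false

open Trigraph Finset

variable {U : Type*} [Fintype U] [DecidableEq U]

/-- Merge the class of `v` into the class of `u`. -/
def mergeP (p : U → U) (u v : U) : U → U := fun a => if p a = v then u else p a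

def crossAll (K : SimpleGraph U) (p : U → U) (x y : U) : Prop :=
  ∀ a b, p a = x → p b = y → K.Adj a b

def crossEx (K : SimpleGraph U) (p : U → U) (x y : U) : Prop :=
  ∃ a b, p a = x ∧ p b = y ∧ K.Adj a b

/-- Quotient trigraph of a simple graph by a partition given by a retraction `p`. -/
def quotT (K : SimpleGraph U) (p : U → U) : Trigraph U where
  verts := Finset.image p Finset.univ
  black x y := x ≠ y ∧ p x = x ∧ p y = y ∧ crossAll K p x y
  red x y := x ≠ y ∧ p x = x ∧ p y = y ∧ crossEx K p x y ∧ ¬ crossAll K p x y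
  black_symm := by
    rintro x y ⟨hne, hx, hy, hall⟩
    exact ⟨hne.symm, hy, hx, fun a b ha hb => (hall b a hb ha).symm⟩
  red_symm := by
    rintro x y ⟨hne, hx, hy, ⟨a, b, ha, hb, hadj⟩, hnall⟩
    exact ⟨hne.symm, hy, hx, ⟨b, a, hb, ha, hadj.symm⟩,
      fun hall => hnall fun a b ha hb => (hall b a hb ha).symm⟩
  black_irrefl := fun x h => h.1 rfl
  red_irrefl := fun x h => h.1 rfl
  black_red_disjoint := fun x y hb hr => hr.2.2.2.2 hb.2.2.2
  black_mem := fun x y h =>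
    ⟨Finset.mem_image.2 ⟨x, Finset.mem_univ x, h.2.1⟩,
     Finset.mem_image.2 ⟨y, Finset.mem_univ y, h.2.2.1⟩⟩
  red_mem := fun x y h =>
    ⟨Finset.mem_image.2 ⟨x, Finset.mem_univ x, h.2.1⟩,
     Finset.mem_image.2 ⟨y, Finset.mem_univ y, h.2.2.1⟩⟩

lemma quotT_verts (K : SimpleGraph U) (p : U → U) :
    (quotT K p).verts = Finset.image p Finset.univ := rfl

lemma quotT_black (K : SimpleGraph U) (p : U → U) (x y : U) :
    (quotT K p).black x y ↔ x ≠ y ∧ p x = x ∧ p y = y ∧ crossAll K p x y := Iff.rfl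

lemma quotT_red (K : SimpleGraph U) (p : U → U) (x y : U) :
    (quotT K p).red x y ↔
      x ≠ y ∧ p x = x ∧ p y = y ∧ crossEx K p x y ∧ ¬ crossAll K p x y := Iff.rfl

lemma Trigraph.ext' {A B : Trigraph U} (hv : A.verts = B.verts)
    (hb : ∀ x y, A.black x y ↔ B.black x y) (hr : ∀ x y, A.red x y ↔ B.red x y) :
    A = B := by
  obtain ⟨v1, b1, r1, _, _, _, _, _, _, _⟩ := A
  obtain ⟨v2, b2, r2, _, _, _, _, _, _, _⟩ := B
  simp only at hv hb hr
  have hb' : b1 = b2 := funext fun x => funext fun y => propext (hb x y)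
  have hr' : r1 = r2 := funext fun x => funext fun y => propext (hr x y)
  subst hv hb' hr'
  rfl

section MergeP

variable {p : U → U} {u v : U}

lemma mergeP_eq_of_ne_v {x : U} (h : p x ≠ v) : mergeP p u v x = p x := if_neg h

lemma mergeP_eq_u_of_eq_v {x : U} (h : p x = v) : mergeP p u v x = u := if_pos h

lemma mergeP_ne_v (huv : u ≠ v) (x : U) : mergeP p u v x ≠ v := by
  unfold mergeP
  split
  · exact huv
  · assumption

lemma mergeP_eq_iff_ne {x y : U} (hyu : y ≠ u) (hyv : y ≠ v) :
    mergeP p u v x = y ↔ p x = y := by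
  unfold mergeP
  split
  next h =>
    rw [h]
    exact ⟨fun hh => absurd hh.symm hyu, fun hh => absurd hh.symm hyv⟩
  next h => rfl

lemma mergeP_eq_u_iff (hu : p u = u) {x : U} :
    mergeP p u v x = u ↔ p x = u ∨ p x = v := by
  unfold mergeP
  split
  next h => simp [h]
  next h =>
    constructor
    · exact fun hh => Or.inl hh
    · rintro (hh | hh)
      · exact hh
      · exact absurd hh h

lemma mergeP_fix_iff (hu : p u = u) (huv : u ≠ v) {x : U} :
    mergeP p u v x = x ↔ p x = x ∧ x ≠ v := by
  constructor
  · intro h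
    unfold mergeP at h
    split at h
    next h' =>
      subst h
      rw [hu] at h'
      exact absurd h' huv
    next h' => exact ⟨h, fun hx => h' (hx ▸ h)⟩
  · rintro ⟨h1, h2⟩
    unfold mergeP
    rw [h1, if_neg h2]

lemma mergeP_idem (hp : ∀ x, p (p x) = p x) (hu : p u = u) (huv : u ≠ v) (x : U) :
    mergeP p u v (mergeP p u v x) = mergeP p u v x := by
  rw [mergeP_fix_iff hu huv]
  unfold mergeP
  split
  next h => exact ⟨hu, huv⟩
  next h => exact ⟨hp x, h⟩

lemma mergeP_fix_u (hu : p u = u) (huv : u ≠ v) : mergeP p u v u = u :=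
  (mergeP_fix_iff hu huv).2 ⟨hu, huv⟩

lemma mergeP_image (hp : ∀ x, p (p x) = p x) (hu : p u = u) (hv : p v = v) (huv : u ≠ v) :
    Finset.image (mergeP p u v) Finset.univ = (Finset.image p Finset.univ).erase v := by
  ext x
  simp only [Finset.mem_image, Finset.mem_erase, Finset.mem_univ, true_and]
  constructor
  · rintro ⟨a, rfl⟩
    refine ⟨mergeP_ne_v huv a, ?_⟩
    unfold mergeP
    split
    · exact ⟨u, hu⟩
    · exact ⟨a, rfl⟩
  · rintro ⟨hxv, a, rfl⟩
    exact ⟨a, mergeP_eq_of_ne_v hxv⟩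

end MergeP

end AuxDev
section AuxDev2
set_option linter.unusedSectionVars false
set_option linter.unusedVariables false

open Trigraph Finset

variable {U : Type*} [Fintype U] [DecidableEq U]

section Contract

variable {K : SimpleGraph U} {p : U → U} {u v : U}

lemma quot_contract (K : SimpleGraph U) {p : U → U} {u v : U}
    (hp : ∀ x, p (p x) = p x) (hu : p u = u) (hv : p v = v) (huv : u ≠ v) :
    Trigraph.IsContractionAt (quotT K p) (quotT K (mergeP p u v)) u v := by
  have hfix : ∀ x : U, mergeP p u v x = x ↔ p x = x ∧ x ≠ v := fun x => mergeP_fix_iff hu huv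
  have hcl : ∀ x a : U, x ≠ u → x ≠ v → (mergeP p u v a = x ↔ p a = x) :=
    fun x a hxu hxv => mergeP_eq_iff_ne hxu hxv
  refine ⟨Finset.mem_image.2 ⟨u, Finset.mem_univ u, hu⟩,
    Finset.mem_image.2 ⟨v, Finset.mem_univ v, hv⟩, huv,
    mergeP_image hp hu hv huv, ?_, ?_, ?_, ?_⟩
  · -- black away from u
    intro x y hxu hyu
    constructor
    · rintro ⟨hne, hx, hy, hall⟩
      obtain ⟨hx', hxv⟩ := (hfix x).1 hx
      obtain ⟨hy', hyv⟩ := (hfix y).1 hy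
      exact ⟨⟨hne, hx', hy', fun a b ha hb =>
        hall a b ((hcl x a hxu hxv).2 ha) ((hcl y b hyu hyv).2 hb)⟩, hxv, hyv⟩
    · rintro ⟨⟨hne, hx', hy', hall⟩, hxv, hyv⟩
      exact ⟨hne, (hfix x).2 ⟨hx', hxv⟩, (hfix y).2 ⟨hy', hyv⟩,
        fun a b ha hb => hall a b ((hcl x a hxu hxv).1 ha) ((hcl y b hyu hyv).1 hb)⟩
  · -- red away from u
    intro x y hxu hyu
    constructor
    · rintro ⟨hne, hx, hy, ⟨a, b, ha, hb, hadj⟩, hnall⟩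
      obtain ⟨hx', hxv⟩ := (hfix x).1 hx
      obtain ⟨hy', hyv⟩ := (hfix y).1 hy
      refine ⟨⟨hne, hx', hy', ⟨a, b, (hcl x a hxu hxv).1 ha, (hcl y b hyu hyv).1 hb, hadj⟩,
        fun hall => hnall ?_⟩, hxv, hyv⟩
      exact fun a b ha hb => hall a b ((hcl x a hxu hxv).1 ha) ((hcl y b hyu hyv).1 hb)
    · rintro ⟨⟨hne, hx', hy', ⟨a, b, ha, hb, hadj⟩, hnall⟩, hxv, hyv⟩
      refine ⟨hne, (hfix x).2 ⟨hx', hxv⟩, (hfix y).2 ⟨hy', hyv⟩,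
        ⟨a, b, (hcl x a hxu hxv).2 ha, (hcl y b hyu hyv).2 hb, hadj⟩, fun hall => hnall ?_⟩
      exact fun a b ha hb => hall a b ((hcl x a hxu hxv).2 ha) ((hcl y b hyu hyv).2 hb)
  · -- black at u
    intro x hxu hxv
    have hxu' : u ≠ x := fun h => hxu h.symm
    constructor
    · rintro ⟨hne, hpu, hx, hall⟩
      obtain ⟨hx', -⟩ := (hfix x).1 hx
      refine ⟨⟨hxu', hu, hx', fun a b ha hb => ?_⟩,
        ⟨fun h => hxv h.symm, hv, hx', fun a b ha hb => ?_⟩⟩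
      · exact hall a b ((mergeP_eq_u_iff hu).2 (Or.inl ha)) ((hcl x b hxu hxv).2 hb)
      · exact hall a b ((mergeP_eq_u_iff hu).2 (Or.inr ha)) ((hcl x b hxu hxv).2 hb)
    · rintro ⟨⟨hne1, -, hx', hall1⟩, ⟨hne2, -, -, hall2⟩⟩
      refine ⟨hxu', (hfix u).2 ⟨hu, huv⟩, (hfix x).2 ⟨hx', hxv⟩, fun a b ha hb => ?_⟩
      have hb' : p b = x := (hcl x b hxu hxv).1 hb
      rcases (mergeP_eq_u_iff hu).1 ha with h | h
      · exact hall1 a b h hb'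
      · exact hall2 a b h hb'
  · -- red at u
    intro x hxu hxv
    have hxu' : u ≠ x := fun h => hxu h.symm
    have hvx : v ≠ x := fun h => hxv h.symm
    constructor
    · rintro ⟨hne, hpu, hx, ⟨a, b, ha, hb, hadj⟩, hnall⟩
      obtain ⟨hx', -⟩ := (hfix x).1 hx
      have hb' : p b = x := (hcl x b hxu hxv).1 hb
      have hnboth : ¬ (crossAll K p u x ∧ crossAll K p v x) := by
        rintro ⟨h1, h2⟩
        apply hnall
        intro a b ha hb
        rcases (mergeP_eq_u_iff hu).1 ha with h | h
        · exact h1 a b h ((hcl x b hxu hxv).1 hb)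
        · exact h2 a b h ((hcl x b hxu hxv).1 hb)
      constructor
      · rcases (mergeP_eq_u_iff hu).1 ha with h | h
        · -- witness in class of u
          by_cases hall : crossAll K p u x
          · exact Or.inl ⟨hxu', hu, hx', hall⟩
          · exact Or.inr (Or.inl ⟨hxu', hu, hx', ⟨a, b, h, hb', hadj⟩, hall⟩)
        · by_cases hall : crossAll K p v x
          · exact Or.inr (Or.inr (Or.inl ⟨hvx, hv, hx', hall⟩))
          · exact Or.inr (Or.inr (Or.inr ⟨hvx, hv, hx', ⟨a, b, h, hb', hadj⟩, hall⟩))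
      · rintro ⟨b1, b2⟩
        exact hnboth ⟨b1.2.2.2, b2.2.2.2⟩
    · rintro ⟨hor, hnboth⟩
      have hx' : p x = x := by
        rcases hor with h | h | h | h
        · exact h.2.2.1
        · exact h.2.2.1
        · exact h.2.2.1
        · exact h.2.2.1
      have hexOr : crossEx K p u x ∨ crossEx K p v x := by
        rcases hor with h | h | h | h
        · exact Or.inl ⟨u, x, hu, hx', h.2.2.2 u x hu hx'⟩
        · obtain ⟨a, b, ha, hb, hadj⟩ := h.2.2.2.1
          exact Or.inl ⟨a, b, ha, hb, hadj⟩
        · exact Or.inr ⟨v, x, hv, hx', h.2.2.2 v x hv hx'⟩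
        · obtain ⟨a, b, ha, hb, hadj⟩ := h.2.2.2.1
          exact Or.inr ⟨a, b, ha, hb, hadj⟩
      refine ⟨hxu', (hfix u).2 ⟨hu, huv⟩, (hfix x).2 ⟨hx', hxv⟩, ?_, ?_⟩
      · rcases hexOr with ⟨a, b, ha, hb, hadj⟩ | ⟨a, b, ha, hb, hadj⟩
        · exact ⟨a, b, (mergeP_eq_u_iff hu).2 (Or.inl ha), (hcl x b hxu hxv).2 hb, hadj⟩
        · exact ⟨a, b, (mergeP_eq_u_iff hu).2 (Or.inr ha), (hcl x b hxu hxv).2 hb, hadj⟩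
      · intro hall
        apply hnboth
        constructor
        · exact ⟨hxu', hu, hx', fun a b ha hb =>
            hall a b ((mergeP_eq_u_iff hu).2 (Or.inl ha)) ((hcl x b hxu hxv).2 hb)⟩
        · exact ⟨hvx, hv, hx', fun a b ha hb =>
            hall a b ((mergeP_eq_u_iff hu).2 (Or.inr ha)) ((hcl x b hxu hxv).2 hb)⟩

end Contract

lemma contractionAt_unique {A B1 B2 : Trigraph U} {u v : U}
    (h1 : Trigraph.IsContractionAt A B1 u v) (h2 : Trigraph.IsContractionAt A B2 u v) :
    B1 = B2 := by
  obtain ⟨hu1, hv1, huv1, hV1, hb1, hr1, hbu1, hru1⟩ := h1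
  obtain ⟨-, -, -, hV2, hb2, hr2, hbu2, hru2⟩ := h2
  have hnbv : ∀ (B : Trigraph U), B.verts = A.verts.erase v → (¬ B.black u v) ∧ (¬ B.red u v) :=
    fun B hV => ⟨fun h => (Finset.mem_erase.1 (hV ▸ (B.black_mem u v h).2)).1 rfl,
      fun h => (Finset.mem_erase.1 (hV ▸ (B.red_mem u v h).2)).1 rfl⟩
  have hbu : ∀ y : U, B1.black u y ↔ B2.black u y := by
    intro y
    by_cases hy : y = u
    · subst hy
      exact iff_of_false (B1.black_irrefl y) (B2.black_irrefl y)
    by_cases hyv : y = v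
    · subst hyv
      exact iff_of_false (hnbv B1 hV1).1 (hnbv B2 hV2).1
    · exact (hbu1 y hy hyv).trans (hbu2 y hy hyv).symm
  have hru : ∀ y : U, B1.red u y ↔ B2.red u y := by
    intro y
    by_cases hy : y = u
    · subst hy
      exact iff_of_false (B1.red_irrefl y) (B2.red_irrefl y)
    by_cases hyv : y = v
    · subst hyv
      exact iff_of_false (hnbv B1 hV1).2 (hnbv B2 hV2).2
    · exact (hru1 y hy hyv).trans (hru2 y hy hyv).symm
  refine Trigraph.ext' (hV1.trans hV2.symm) ?_ ?_
  · intro x y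
    by_cases hx : x = u
    · subst hx; exact hbu y
    by_cases hy : y = u
    · subst hy
      constructor
      · intro h; exact B2.black_symm y x ((hbu x).1 (B1.black_symm x y h))
      · intro h; exact B1.black_symm y x ((hbu x).2 (B2.black_symm x y h))
    · exact (hb1 x y hx hy).trans (hb2 x y hx hy).symm
  · intro x y
    by_cases hx : x = u
    · subst hx; exact hru y
    by_cases hy : y = u
    · subst hy
      constructor
      · intro h; exact B2.red_symm y x ((hru x).1 (B1.red_symm x y h))
      · intro h; exact B1.red_symm y x ((hru x).2 (B2.red_symm x y h))
    · exact (hr1 x y hx hy).trans (hr2 x y hx hy).symm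

end AuxDev2
section AuxDev3
set_option linter.unusedSectionVars false
set_option linter.unusedVariables false
set_option maxHeartbeats 1000000

open Trigraph Finset

variable {U : Type*} [Fintype U] [DecidableEq U]

lemma quotT_id (K : SimpleGraph U) : quotT K id = K.toTrigraph := by
  refine Trigraph.ext' ?_ ?_ ?_
  · simp [quotT_verts, SimpleGraph.toTrigraph, SimpleGraph.toTrigraphOn]
  · intro x y
    rw [quotT_black]
    show _ ↔ K.Adj x y ∧ x ∈ Finset.univ ∧ y ∈ Finset.univ
    constructor
    · rintro ⟨hne, -, -, hall⟩
      exact ⟨hall x y rfl rfl, Finset.mem_univ x, Finset.mem_univ y⟩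
    · rintro ⟨h, -, -⟩
      refine ⟨h.ne, rfl, rfl, fun a b ha hb => ?_⟩
      have ha' : a = x := ha
      have hb' : b = y := hb
      rw [ha', hb']; exact h
  · intro x y
    rw [quotT_red]
    show _ ↔ False
    simp only [iff_false]
    rintro ⟨hne, -, -, ⟨a, b, ha, hb, hadj⟩, hnall⟩
    refine hnall fun a' b' ha' hb' => ?_
    have h1 : a' = x := ha'
    have h2 : b' = y := hb'
    have h3 : a = x := ha
    have h4 : b = y := hb
    rw [h1, h2]
    rw [h3, h4] at hadj
    exact hadj

lemma quotT_congr (K : SimpleGraph U) {p q : U → U} (h : ∀ x, p x = q x) :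
    quotT K p = quotT K q := by
  rw [funext h]

lemma mem_image_fix {p : U → U} (hp : ∀ x, p (p x) = p x) {x : U}
    (h : x ∈ Finset.image p Finset.univ) : p x = x := by
  obtain ⟨a, -, rfl⟩ := Finset.mem_image.1 h
  exact hp a

/-- Counting: a set of pairs whose second coordinates lie in `T` and with at most `k`
elements per fiber has at most `T.ncard * k` elements. -/
lemma ncard_pairs_le {B C : Type*} [Fintype B] [Fintype C] [DecidableEq B] [DecidableEq C]
    (S : Set (B × C)) (T : Set C) (k : ℕ)
    (h1 : ∀ η ∈ S, η.2 ∈ T) (h2 : ∀ c, {y | (y, c) ∈ S}.ncard ≤ k) :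
    S.ncard ≤ T.ncard * k := by
  classical
  have hsub : S.toFinset ⊆
      T.toFinset.biUnion (fun c => ({y | (y, c) ∈ S}).toFinset.image (fun y => (y, c))) := by
    intro η hη
    rw [Set.mem_toFinset] at hη
    rw [Finset.mem_biUnion]
    refine ⟨η.2, Set.mem_toFinset.2 (h1 η hη), ?_⟩
    rw [Finset.mem_image]
    exact ⟨η.1, Set.mem_toFinset.2 hη, rfl⟩
  calc S.ncard = S.toFinset.card := (Set.ncard_eq_toFinset_card' S)
    _ ≤ _ := Finset.card_le_card hsub
    _ ≤ ∑ c ∈ T.toFinset, (({y | (y, c) ∈ S}).toFinset.image (fun y => (y, c))).card :=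
        Finset.card_biUnion_le
    _ ≤ ∑ c ∈ T.toFinset, k := by
        refine Finset.sum_le_sum fun c _ => ?_
        calc (({y | (y, c) ∈ S}).toFinset.image (fun y => (y, c))).card
            ≤ ({y | (y, c) ∈ S}).toFinset.card := Finset.card_image_le
          _ = ({y | (y, c) ∈ S}).ncard := (Set.ncard_eq_toFinset_card' _).symm
          _ ≤ k := h2 c
    _ = T.toFinset.card * k := by rw [Finset.sum_const, smul_eq_mul]
    _ = T.ncard * k := by rw [Set.ncard_eq_toFinset_card']

lemma ncard_fiber_eq {B C : Type*} (S : Set (B × C)) (c : C) :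
    {η | η ∈ S ∧ η.2 = c}.ncard = {y | (y, c) ∈ S}.ncard := by
  have : {η | η ∈ S ∧ η.2 = c} = (fun y => (y, c)) '' {y | (y, c) ∈ S} := by
    ext η
    constructor
    · rintro ⟨hη, h2⟩
      exact ⟨η.1, by rwa [Set.mem_setOf_eq, ← h2], by rw [← h2]⟩
    · rintro ⟨y, hy, rfl⟩
      exact ⟨hy, rfl⟩
  rw [this, Set.ncard_image_of_injective _ (fun a b h => (Prod.mk.injEq _ _ _ _ ▸ h).1)]

lemma nbhd_ncard_le {W : Type*} [Fintype W] (H : SimpleGraph W) (c : W) :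
    {w | H.Adj c w}.ncard ≤ maxDeg H := by
  unfold maxDeg
  exact Finset.le_sup (f := fun v => {u | H.Adj v u}.ncard) (Finset.mem_univ c)

lemma ncard_le_card_univ {B : Type*} [Fintype B] (S : Set B) :
    S.ncard ≤ Fintype.card B := by
  calc S.ncard ≤ (Set.univ : Set B).ncard :=
        Set.ncard_le_ncard (Set.subset_univ S) Set.finite_univ
    _ = Fintype.card B := by rw [Set.ncard_univ, Nat.card_eq_fintype_card]

/-- Every simple graph on a nonempty finite vertex type has a contraction sequence. -/
lemma hasSeq_exists (K : SimpleGraph U) [Nonempty U] :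
    Trigraph.HasSeq K.toTrigraph (Fintype.card U) := by
  classical
  have hN : 0 < Fintype.card U := Fintype.card_pos
  set N := Fintype.card U with hNdef
  let e : U ≃ Fin N := Fintype.equivFin U
  let qq : ℕ → U → U := fun i x =>
    if h : 1 ≤ i ∧ i ≤ N ∧ i ≤ (e x : ℕ) then e.symm ⟨i - 1, by omega⟩ else x
  have hq_ge : ∀ i x, ∀ h : 1 ≤ i ∧ i ≤ N ∧ i ≤ (e x : ℕ),
      qq i x = e.symm ⟨i - 1, by omega⟩ := fun i x h => dif_pos h
  have hq_lt : ∀ i x, ¬ (1 ≤ i ∧ i ≤ N ∧ i ≤ (e x : ℕ)) → qq i x = x :=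
    fun i x h => dif_neg h
  have hval : ∀ (x : U) (a : ℕ) (ha : a < N), x = e.symm ⟨a, ha⟩ ↔ (e x : ℕ) = a := by
    intro x a ha
    rw [Equiv.eq_symm_apply, Fin.ext_iff]
  have hidem : ∀ i x, qq i (qq i x) = qq i x := by
    intro i x
    by_cases h : 1 ≤ i ∧ i ≤ N ∧ i ≤ (e x : ℕ)
    · rw [hq_ge i x h]
      apply hq_lt
      rintro ⟨h1, h2, h3⟩
      rw [Equiv.apply_symm_apply] at h3
      simp only at h3
      omega
    · rw [hq_lt i x h, hq_lt i x h]
  have hqid : ∀ i, N ≤ i → ∀ x, qq i x = x := by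
    intro i hi x
    apply hq_lt
    rintro ⟨h1, h2, h3⟩
    have := (e x).2
    omega
  have hverts : (K.toTrigraph).verts.card = N := by
    simp [SimpleGraph.toTrigraph, SimpleGraph.toTrigraphOn, hNdef]
  refine ⟨fun i => quotT K (qq i), ?_, ?_, ?_⟩
  · show quotT K (qq ((K.toTrigraph).verts.card)) = K.toTrigraph
    rw [hverts]
    exact (quotT_congr K (q := id) (fun x => hqid N le_rfl x)).trans (quotT_id K)
  · intro i h1 h2
    rw [hverts] at h2
    show Trigraph.IsContraction (quotT K (qq (i+1))) (quotT K (qq i))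
    have hi1 : i - 1 < N := by omega
    have hi2 : i < N := h2
    refine ⟨e.symm ⟨i - 1, hi1⟩, e.symm ⟨i, hi2⟩, ?_⟩
    have hfixa : qq (i+1) (e.symm ⟨i - 1, hi1⟩) = e.symm ⟨i - 1, hi1⟩ := by
      apply hq_lt
      rintro ⟨-, -, h3⟩
      rw [Equiv.apply_symm_apply] at h3
      simp only at h3
      omega
    have hfixb : qq (i+1) (e.symm ⟨i, hi2⟩) = e.symm ⟨i, hi2⟩ := by
      apply hq_lt
      rintro ⟨-, -, h3⟩
      rw [Equiv.apply_symm_apply] at h3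
      simp only at h3
      omega
    have hne : e.symm ⟨i - 1, hi1⟩ ≠ e.symm ⟨i, hi2⟩ := by
      intro hh
      have := congrArg e hh
      rw [Equiv.apply_symm_apply, Equiv.apply_symm_apply] at this
      have h5 : i - 1 = i := Fin.mk.inj_iff.1 this
      omega
    have hmerge : qq i = mergeP (qq (i+1)) (e.symm ⟨i - 1, hi1⟩) (e.symm ⟨i, hi2⟩) := by
      funext x
      unfold mergeP
      by_cases hc : i + 1 ≤ (e x : ℕ)
      · have hcond : qq (i+1) x = e.symm ⟨i, hi2⟩ := by
          rw [hq_ge (i+1) x ⟨by omega, by omega, hc⟩]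
          congr 1
        rw [hq_ge i x ⟨h1, by omega, by omega⟩, if_pos hcond]
      · by_cases hc2 : (e x : ℕ) = i
        · rw [hq_ge i x ⟨h1, by omega, by omega⟩, hq_lt (i+1) x (by omega),
            if_pos ((hval x i hi2).2 hc2)]
        · rw [hq_lt i x (by omega), hq_lt (i+1) x (by omega), if_neg]
          intro hx
          exact hc2 ((hval x i hi2).1 hx)
    rw [hmerge]
    exact quot_contract K (hidem (i+1)) hfixa hfixb hne
  · intro i h1 h2 x
    show Trigraph.redDeg _ x ≤ N
    unfold Trigraph.redDeg
    exact ncard_le_card_univ _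

end AuxDev3
section AuxDev4
set_option linter.unusedSectionVars false
set_option linter.unusedVariables false
set_option maxHeartbeats 1000000

open Trigraph Finset

variable {U : Type*} [Fintype U] [DecidableEq U]

open Classical in
noncomputable def pickPair {U : Type*} [DecidableEq U] [Nonempty U]
    (f : ℕ → Trigraph U) (i : ℕ) : U × U :=
  if h : Trigraph.IsContraction (f (i+1)) (f i) then
    (Exists.choose h, (Exists.choose_spec h).choose)
  else (Classical.arbitrary U, Classical.arbitrary U)

lemma pickPair_spec {U : Type*} [DecidableEq U] [Nonempty U] (f : ℕ → Trigraph U) (i : ℕ)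
    (h : Trigraph.IsContraction (f (i+1)) (f i)) :
    Trigraph.IsContractionAt (f (i+1)) (f i) (pickPair f i).1 (pickPair f i).2 := by
  unfold pickPair
  rw [dif_pos h]
  exact (Exists.choose_spec h).choose_spec

noncomputable def partSeqAux {U : Type*} [Nonempty U] [DecidableEq U]
    (f : ℕ → Trigraph U) (N : ℕ) : ℕ → (U → U)
  | 0 => id
  | (j+1) => mergeP (partSeqAux f N j) (pickPair f (N - j - 1)).1 (pickPair f (N - j - 1)).2

lemma toTrigraph_card (K : SimpleGraph U) : (K.toTrigraph).verts.card = Fintype.card U := by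
  simp [SimpleGraph.toTrigraph, SimpleGraph.toTrigraphOn]

/-- Extract a partition-representation of a contraction sequence of a simple graph. -/
lemma extract (K : SimpleGraph U) [Nonempty U] {d : ℕ}
    (h : Trigraph.HasSeq K.toTrigraph d) :
    ∃ (q : ℕ → U → U) (cu cv : ℕ → U),
      (∀ x, q (Fintype.card U) x = x) ∧
      (∀ i, 1 ≤ i → i ≤ Fintype.card U →
        (∀ x, q i (q i x) = q i x) ∧ Trigraph.RedDegLE (quotT K (q i)) d) ∧
      (∀ i, 1 ≤ i → i < Fintype.card U →
        q (i+1) (cu i) = cu i ∧ q (i+1) (cv i) = cv i ∧ cu i ≠ cv i ∧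
        q i = mergeP (q (i+1)) (cu i) (cv i)) ∧
      (∀ x y, q 1 x = q 1 y) := by
  classical
  obtain ⟨f, hfN, hcon, hdeg⟩ := h
  have hN : 0 < Fintype.card U := Fintype.card_pos
  set N := Fintype.card U with hNdef
  rw [toTrigraph_card] at hfN hcon hdeg
  set q : ℕ → U → U := fun i => partSeqAux f N (N - i) with hq
  have hqN : ∀ x, q N x = x := by
    intro x
    show partSeqAux f N (N - N) x = x
    rw [Nat.sub_self]
    rfl
  have hqstep : ∀ i, 1 ≤ i → i < N →
      q i = mergeP (q (i+1)) (pickPair f i).1 (pickPair f i).2 := by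
    intro i h1 h2
    show partSeqAux f N (N - i) = _
    have e1 : N - i = (N - (i+1)) + 1 := by omega
    rw [e1]
    show mergeP (partSeqAux f N (N - (i+1))) (pickPair f (N - (N - (i+1)) - 1)).1
      (pickPair f (N - (N - (i+1)) - 1)).2 = _
    have e2 : N - (N - (i+1)) - 1 = i := by omega
    rw [e2]
  have inv : ∀ k i, i = N - k → 1 ≤ i →
      (∀ x, q i (q i x) = q i x) ∧ quotT K (q i) = f i := by
    intro k
    induction k with
    | zero =>
      intro i hi h1
      have : i = N := by omega
      subst this
      refine ⟨fun x => by rw [hqN, hqN], ?_⟩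
      rw [hfN]
      exact (quotT_congr K (q := id) hqN).trans (quotT_id K)
    | succ k ih =>
      intro i hi h1
      have hiN : i < N := by omega
      have hi1 : i + 1 = N - k := by omega
      obtain ⟨idem1, hquot1⟩ := ih (i+1) hi1 (by omega)
      have hpick := pickPair_spec f i (hcon i h1 hiN)
      set u := (pickPair f i).1
      set v := (pickPair f i).2
      have hu : q (i+1) u = u := by
        apply mem_image_fix idem1
        have := hpick.1
        rwa [← hquot1] at this
      have hv : q (i+1) v = v := by
        apply mem_image_fix idem1
        have := hpick.2.1
        rwa [← hquot1] at this
      have hne : u ≠ v := hpick.2.2.1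
      have hqi := hqstep i h1 hiN
      constructor
      · intro x
        rw [hqi]
        exact mergeP_idem idem1 hu hne x
      · have hc := quot_contract K idem1 hu hv hne
        rw [hquot1, ← hqi] at hc
        exact contractionAt_unique hc hpick
  have hcard : ∀ k i, i = N - k → 1 ≤ i → (f i).verts.card = i := by
    intro k
    induction k with
    | zero =>
      intro i hi h1
      have : i = N := by omega
      subst this
      rw [hfN, toTrigraph_card]
    | succ k ih =>
      intro i hi h1
      have hiN : i < N := by omega
      have := ih (i+1) (by omega) (by omega)
      obtain ⟨u, v, hat⟩ := hcon i h1 hiN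
      rw [hat.2.2.2.1, Finset.card_erase_of_mem hat.2.1, this]
      omega
  refine ⟨q, fun i => (pickPair f i).1, fun i => (pickPair f i).2, hqN, ?_, ?_, ?_⟩
  · intro i h1 h2
    obtain ⟨hidem, hquot⟩ := inv (N - i) i (by omega) h1
    exact ⟨hidem, hquot ▸ hdeg i h1 h2⟩
  · intro i h1 h2
    obtain ⟨idem1, hquot1⟩ := inv (N - (i+1)) (i+1) (by omega) (by omega)
    have hpick := pickPair_spec f i (hcon i h1 h2)
    refine ⟨?_, ?_, hpick.2.2.1, hqstep i h1 h2⟩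
    · apply mem_image_fix idem1
      have := hpick.1
      rwa [← hquot1] at this
    · apply mem_image_fix idem1
      have := hpick.2.1
      rwa [← hquot1] at this
  · intro x y
    obtain ⟨-, hquot⟩ := inv (N - 1) 1 (by omega) le_rfl
    have h1 : (f 1).verts.card = 1 := hcard (N - 1) 1 (by omega) le_rfl
    rw [← hquot] at h1
    have hx : q 1 x ∈ (quotT K (q 1)).verts := Finset.mem_image.2 ⟨x, Finset.mem_univ x, rfl⟩
    have hy : q 1 y ∈ (quotT K (q 1)).verts := Finset.mem_image.2 ⟨y, Finset.mem_univ y, rfl⟩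
    exact Finset.card_le_one.1 (le_of_eq h1) _ hx _ hy

end AuxDev4
section AuxDev5
set_option linter.unusedSectionVars false
set_option linter.unusedVariables false
set_option maxHeartbeats 2000000

open Trigraph Finset

variable {V W : Type*} [Fintype V] [Fintype W] [DecidableEq V] [DecidableEq W]
variable (G : SimpleGraph V) (H : SimpleGraph W)

/-- Transfer a "weak red" condition between two partitions to a genuine red edge of a
quotient trigraph. -/
lemma cross_red_transfer {ϖ ϖ' τ : V → V} {a y : V}
    (ha : ∀ x, ϖ x = a ↔ τ x = a) (hy : ∀ x, ϖ' x = y ↔ τ x = y)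
    (hτa : τ a = a) (hτy : τ y = y) (hay : a ≠ y)
    (hex : ∃ x x', ϖ x = a ∧ ϖ' x' = y ∧ (x = x' ∨ G.Adj x x'))
    (hnall : ¬ ∀ x x', ϖ x = a → ϖ' x' = y → (x = x' ∨ G.Adj x x')) :
    (quotT G τ).red a y := by
  refine ⟨hay, hτa, hτy, ?_, ?_⟩
  · obtain ⟨x, x', hx, hx', hor⟩ := hex
    rcases hor with rfl | hadj
    · exact absurd (((ha x).1 hx).symm.trans ((hy x).1 hx')) hay
    · exact ⟨x, x', (ha x).1 hx, (hy x').1 hx', hadj⟩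
  · intro hall
    apply hnall
    intro x x' hx hx'
    exact Or.inr (hall x x' ((ha x).1 hx) ((hy x').1 hx'))

/-- Phase 2 red-degree bound. -/
lemma phase2_red (z : V) (ρ : W → W) (hρ : ∀ w, ρ (ρ w) = ρ w) {dH : ℕ}
    (hd : Trigraph.RedDegLE (quotT H ρ) dH) :
    Trigraph.RedDegLE (quotT (strongProd G H) (fun η : V × W => (z, ρ η.2)))
      (dH + maxDeg H) := by
  intro ζ
  set P : V × W → V × W := fun η => (z, ρ η.2) with hP
  set KT := quotT (strongProd G H) P with hKT
  show {η | KT.red ζ η}.ncard ≤ dH + maxDeg H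
  set c := ζ.2 with hc
  have hsub : {η | KT.red ζ η} ⊆
      (fun b => ((z, b) : V × W)) '' ({b | (quotT H ρ).red c b} ∪ {b | H.Adj c b}) := by
    rintro ⟨y, b⟩ hred
    obtain ⟨hne, hζf, hηf, hex, hnall⟩ := hred
    -- ζ and η are fixed points
    have hζ1 : ζ.1 = z := (congrArg Prod.fst hζf).symm
    have hζ2 : ρ c = c := congrArg Prod.snd hζf
    have hy : y = z := (congrArg Prod.fst hηf).symm
    have hb : ρ b = b := congrArg Prod.snd hηf
    have hcb : c ≠ b := by
      intro hh
      apply hne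
      have hζeq : ζ = (z, c) := by rw [← hζ1]
      rw [hζeq, hh, hy]
    have hexρ : crossEx H ρ c b := by
      obtain ⟨α, β, hα, hβ, hadj⟩ := hex
      have hα2 : ρ α.2 = c := by
        have := congrArg Prod.snd hα
        simpa using this
      have hβ2 : ρ β.2 = b := congrArg Prod.snd hβ
      rcases hadj.2.2 with he | hadjH
      · exact absurd (hα2 ▸ he ▸ hβ2) hcb
      · exact ⟨α.2, β.2, hα2, hβ2, hadjH⟩
    by_cases hall : crossAll H ρ c b
    · exact ⟨b, Or.inr (hall c b hζ2 hb), by rw [hy]⟩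
    · exact ⟨b, Or.inl ⟨hcb, hζ2, hb, hexρ, hall⟩, by rw [hy]⟩
  calc {η | KT.red ζ η}.ncard
      ≤ ((fun b => ((z, b) : V × W)) ''
          ({b | (quotT H ρ).red c b} ∪ {b | H.Adj c b})).ncard :=
        Set.ncard_le_ncard hsub (Set.toFinite _)
    _ = ({b | (quotT H ρ).red c b} ∪ {b | H.Adj c b}).ncard :=
        Set.ncard_image_of_injective _ (fun b1 b2 h => (Prod.mk.injEq _ _ _ _ ▸ h).2)
    _ ≤ {b | (quotT H ρ).red c b}.ncard + {b | H.Adj c b}.ncard := Set.ncard_union_le _ _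
    _ ≤ dH + maxDeg H := Nat.add_le_add (hd c) (nbhd_ncard_le H c)

end AuxDev5
section AuxDev6
set_option linter.unusedSectionVars false
set_option linter.unusedVariables false
set_option maxHeartbeats 2000000

open Trigraph Finset

variable {V W : Type*} [Fintype V] [Fintype W] [DecidableEq V] [DecidableEq W]
variable (G : SimpleGraph V) (H : SimpleGraph W)

/-- Phase 1 red-degree bound. -/
lemma phase1_red (p : V → V) (u v : V)
    (hp : ∀ x, p (p x) = p x) (hu : p u = u) (hv : p v = v) (huv : u ≠ v)
    {dG : ℕ}
    (hdp : Trigraph.RedDegLE (quotT G p) dG)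
    (hdq : Trigraph.RedDegLE (quotT G (mergeP p u v)) dG)
    (M : W → Prop) [DecidablePred M] :
    Trigraph.RedDegLE (quotT (strongProd G H)
      (fun η : V × W => ((if M η.2 then mergeP p u v else p) η.1, η.2)))
      (dG * (maxDeg H + 1) + 2 * maxDeg H) := by
  classical
  intro ζ
  obtain ⟨a, c⟩ := ζ
  set q : V → V := mergeP p u v with hqdef
  set π : W → V → V := fun w => if M w then q else p with hπdef
  set P : V × W → V × W := fun η => (π η.2 η.1, η.2) with hPdef
  set KT := quotT (strongProd G H) P with hKT
  show {η | KT.red (a, c) η}.ncard ≤ _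
  have hπM : ∀ w, M w → π w = q := fun w hw => by simp [hπdef, if_pos hw]
  have hπM' : ∀ w, ¬ M w → π w = p := fun w hw => by simp [hπdef, if_neg hw]
  have hπdeg : ∀ w, Trigraph.RedDegLE (quotT G (π w)) dG := by
    intro w
    by_cases hw : M w
    · rw [hπM w hw]; exact hdq
    · rw [hπM' w hw]; exact hdp
  have hqfix : ∀ x, q x = x ↔ p x = x ∧ x ≠ v := fun x => mergeP_fix_iff hu huv
  have hPeq : ∀ (α η0 : V × W), P α = η0 ↔ (α.2 = η0.2 ∧ π η0.2 α.1 = η0.1) := by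
    intro α η0
    constructor
    · intro h
      have h2' := congrArg Prod.snd h
      have h1' := congrArg Prod.fst h
      have h2 : α.2 = η0.2 := h2'
      refine ⟨h2, ?_⟩
      have h1 : π α.2 α.1 = η0.1 := h1'
      rw [← h2]
      exact h1
    · rintro ⟨h2, h1⟩
      show (π α.2 α.1, α.2) = η0
      rw [h2, h1]
  set S2 : Set (V × W) := {η | KT.red (a, c) η ∧ η.2 ≠ c} with hS2def
  -- own-column bound
  have hS1 : {η | KT.red (a, c) η ∧ η.2 = c}.ncard ≤ dG := by
    rw [show {η | KT.red (a, c) η ∧ η.2 = c} =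
      {η | η ∈ {η' | KT.red (a, c) η'} ∧ η.2 = c} from rfl, ncard_fiber_eq]
    refine le_trans (Set.ncard_le_ncard ?_ (Set.toFinite _)) (hπdeg c a)
    intro y hy
    obtain ⟨hne, hfa, hfy, hex, hnall⟩ := hy
    have hfa' : π c a = a := ((hPeq _ (a, c)).1 hfa).2
    have hfy' : π c y = y := ((hPeq _ ((y, c) : V × W)).1 hfy).2
    have hay : a ≠ y := fun h => hne (by rw [h])
    refine ⟨hay, hfa', hfy', ?_, ?_⟩
    · obtain ⟨α, β, hα, hβ, hadj⟩ := hex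
      obtain ⟨hα2, hα1⟩ := (hPeq α (a, c)).1 hα
      obtain ⟨hβ2, hβ1⟩ := (hPeq β ((y, c) : V × W)).1 hβ
      refine ⟨α.1, β.1, hα1, hβ1, ?_⟩
      rcases hadj.2.1 with he | hGadj
      · exact absurd (Prod.ext he (hα2.trans hβ2.symm)) hadj.1
      · exact hGadj
    · intro hall
      apply hnall
      intro α β hα hβ
      obtain ⟨hα2, hα1⟩ := (hPeq α (a, c)).1 hα
      obtain ⟨hβ2, hβ1⟩ := (hPeq β ((y, c) : V × W)).1 hβ
      have hG := hall α.1 β.1 hα1 hβ1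
      exact ⟨fun h => hG.ne (congrArg Prod.fst h), Or.inr hG, Or.inl (hα2.trans hβ2.symm)⟩
  -- distilled elimination for other columns
  have helim : ∀ (y : V) (c' : W), c' ≠ c → (y, c') ∈ S2 →
      H.Adj c c' ∧ π c a = a ∧ π c' y = y ∧
      (∃ x x', π c x = a ∧ π c' x' = y ∧ (x = x' ∨ G.Adj x x')) ∧
      ¬ (∀ x x', π c x = a → π c' x' = y → (x = x' ∨ G.Adj x x')) := by
    intro y c' hcc hy
    obtain ⟨⟨hne, hfa, hfy, hex, hnall⟩, -⟩ := hy
    have hfa' : π c a = a := ((hPeq _ (a, c)).1 hfa).2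
    have hfy' : π c' y = y := ((hPeq _ ((y, c') : V × W)).1 hfy).2
    obtain ⟨α, β, hα, hβ, hadj⟩ := hex
    obtain ⟨hα2, hα1⟩ := (hPeq α (a, c)).1 hα
    obtain ⟨hβ2, hβ1⟩ := (hPeq β ((y, c') : V × W)).1 hβ
    have hH : H.Adj c c' := by
      rcases hadj.2.2 with he | hadjH
      · exact absurd (hα2.symm.trans (he.trans hβ2)) (fun hh => hcc hh.symm)
      · rwa [hα2, hβ2] at hadjH
    refine ⟨hH, hfa', hfy', ⟨α.1, β.1, hα1, hβ1, hadj.2.1⟩, ?_⟩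
    intro hall
    apply hnall
    intro α' β' hα' hβ'
    obtain ⟨hα2', hα1'⟩ := (hPeq α' (a, c)).1 hα'
    obtain ⟨hβ2', hβ1'⟩ := (hPeq β' ((y, c') : V × W)).1 hβ'
    refine ⟨?_, hall α'.1 β'.1 hα1' hβ1', Or.inr (by rwa [hα2', hβ2'])⟩
    intro h
    exact hcc (hβ2'.symm.trans ((congrArg Prod.snd h).symm.trans hα2'))
  -- per-column key bound
  have key : ∀ c', c' ≠ c → ∃ τ : V → V, Trigraph.RedDegLE (quotT G τ) dG ∧
      ∃ e2 : V, {y | ((y, c') : V × W) ∈ S2} ⊆ {y | (quotT G τ).red a y} ∪ {a, e2} := by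
    intro c' hcc
    by_cases hMc : M c <;> by_cases hMc' : M c'
    · -- both merged
      refine ⟨q, hdq, a, ?_⟩
      intro y hy
      obtain ⟨hH, hfa, hfy, hex, hnall⟩ := helim y c' hcc hy
      rw [hπM c hMc] at hfa hex hnall
      rw [hπM c' hMc'] at hfy hex hnall
      by_cases hya : y = a
      · exact Or.inr (by simp [hya])
      · exact Or.inl (cross_red_transfer G (fun x => Iff.rfl) (fun x => Iff.rfl)
          hfa hfy (fun h => hya h.symm) hex hnall)
    · -- c merged, c' not
      by_cases hau : a = u
      · refine ⟨q, hdq, v, ?_⟩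
        intro y hy
        obtain ⟨hH, hfa, hfy, hex, hnall⟩ := helim y c' hcc hy
        rw [hπM c hMc] at hfa hex hnall
        rw [hπM' c' hMc'] at hfy hex hnall
        by_cases hya : y = a
        · exact Or.inr (by simp [hya])
        by_cases hyv : y = v
        · exact Or.inr (by simp [hyv])
        · have hyu : y ≠ u := fun h => hya (h.trans hau.symm)
          exact Or.inl (cross_red_transfer G (fun x => Iff.rfl)
            (fun x => (mergeP_eq_iff_ne hyu hyv).symm)
            hfa ((hqfix y).2 ⟨hfy, hyv⟩) (fun h => hya h.symm) hex hnall)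
      · refine ⟨p, hdp, a, ?_⟩
        intro y hy
        obtain ⟨hH, hfa, hfy, hex, hnall⟩ := helim y c' hcc hy
        rw [hπM c hMc] at hfa hex hnall
        rw [hπM' c' hMc'] at hfy hex hnall
        have hav : a ≠ v := ((hqfix a).1 hfa).2
        have hpa : p a = a := ((hqfix a).1 hfa).1
        by_cases hya : y = a
        · exact Or.inr (by simp [hya])
        · exact Or.inl (cross_red_transfer G
            (fun x => mergeP_eq_iff_ne hau hav) (fun x => Iff.rfl)
            hpa hfy (fun h => hya h.symm) hex hnall)
    · -- c not merged, c' merged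
      refine ⟨p, hdp, u, ?_⟩
      intro y hy
      obtain ⟨hH, hfa, hfy, hex, hnall⟩ := helim y c' hcc hy
      rw [hπM' c hMc] at hfa hex hnall
      rw [hπM c' hMc'] at hfy hex hnall
      by_cases hya : y = a
      · exact Or.inr (by simp [hya])
      by_cases hyu : y = u
      · exact Or.inr (by simp [hyu])
      · have hyv : y ≠ v := ((hqfix y).1 hfy).2
        have hpy : p y = y := ((hqfix y).1 hfy).1
        exact Or.inl (cross_red_transfer G (fun x => Iff.rfl)
          (fun x => mergeP_eq_iff_ne hyu hyv)
          hfa hpy (fun h => hya h.symm) hex hnall)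
    · -- neither merged
      refine ⟨p, hdp, a, ?_⟩
      intro y hy
      obtain ⟨hH, hfa, hfy, hex, hnall⟩ := helim y c' hcc hy
      rw [hπM' c hMc] at hfa hex hnall
      rw [hπM' c' hMc'] at hfy hex hnall
      by_cases hya : y = a
      · exact Or.inr (by simp [hya])
      · exact Or.inl (cross_red_transfer G (fun x => Iff.rfl) (fun x => Iff.rfl)
          hfa hfy (fun h => hya h.symm) hex hnall)
  -- count S2
  have hS2 : S2.ncard ≤ maxDeg H * (dG + 2) := by
    have hcount := ncard_pairs_le S2 {w' | H.Adj c w'} (dG + 2) ?_ ?_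
    · exact le_trans hcount (Nat.mul_le_mul_right _ (nbhd_ncard_le H c))
    · rintro ⟨y, c'⟩ hη
      exact (helim y c' hη.2 hη).1
    · intro c'
      by_cases hcc : c' = c
      · subst hcc
        have : {y | ((y, c') : V × W) ∈ S2} = ∅ := by
          ext y
          simp only [Set.mem_empty_iff_false, iff_false]
          intro hy
          exact hy.2 rfl
        rw [this]
        simp
      · obtain ⟨τ, hτdeg, e2, hsub⟩ := key c' hcc
        calc {y | ((y, c') : V × W) ∈ S2}.ncard
            ≤ ({y | (quotT G τ).red a y} ∪ {a, e2}).ncard :=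
              Set.ncard_le_ncard hsub (Set.toFinite _)
          _ ≤ {y | (quotT G τ).red a y}.ncard + ({a, e2} : Set V).ncard :=
              Set.ncard_union_le _ _
          _ ≤ dG + 2 := by
              refine Nat.add_le_add (hτdeg a) ?_
              calc ({a, e2} : Set V).ncard ≤ ({e2} : Set V).ncard + 1 :=
                    Set.ncard_insert_le _ _
                _ ≤ 2 := by
                    rw [Set.ncard_singleton]

  -- assemble
  have hsplit : {η | KT.red (a, c) η} ⊆ {η | KT.red (a, c) η ∧ η.2 = c} ∪ S2 := by
    intro η hη
    by_cases h : η.2 = c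
    · exact Or.inl ⟨hη, h⟩
    · exact Or.inr ⟨hη, h⟩
  calc {η | KT.red (a, c) η}.ncard
      ≤ ({η | KT.red (a, c) η ∧ η.2 = c} ∪ S2).ncard :=
        Set.ncard_le_ncard hsplit (Set.toFinite _)
    _ ≤ {η | KT.red (a, c) η ∧ η.2 = c}.ncard + S2.ncard := Set.ncard_union_le _ _
    _ ≤ dG + maxDeg H * (dG + 2) := Nat.add_le_add hS1 hS2
    _ = dG * (maxDeg H + 1) + 2 * maxDeg H := by ring

end AuxDev6
set_option linter.unusedSectionVars false
set_option linter.unusedVariables false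
set_option maxHeartbeats 4000000 in
/-- `tww(G ⊠ H) ≤ max (tww(G)·(Δ(H)+1) + 2Δ(H)) (tww(H) + Δ(H))`. -/
theorem twin_width_strong_product {V W : Type*} [Fintype V] [Fintype W]
    [DecidableEq V] [DecidableEq W] [Nonempty V] [Nonempty W]
    (G : SimpleGraph V) (H : SimpleGraph W) :
    Trigraph.tww (strongProd G H).toTrigraph ≤
      max (Trigraph.tww G.toTrigraph * (maxDeg H + 1) + 2 * maxDeg H)
          (Trigraph.tww H.toTrigraph + maxDeg H) := by
  classical
  set Δ := maxDeg H with hΔ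
  set dG := Trigraph.tww G.toTrigraph with hdG
  set dH := Trigraph.tww H.toTrigraph with hdH
  set D := max (dG * (Δ + 1) + 2 * Δ) (dH + Δ) with hD
  have hGseq : Trigraph.HasSeq G.toTrigraph dG := by
    rw [hdG, Trigraph.tww]
    exact Nat.sInf_mem (s := {d | Trigraph.HasSeq G.toTrigraph d}) ⟨_, hasSeq_exists G⟩
  have hHseq : Trigraph.HasSeq H.toTrigraph dH := by
    rw [hdH, Trigraph.tww]
    exact Nat.sInf_mem (s := {d | Trigraph.HasSeq H.toTrigraph d}) ⟨_, hasSeq_exists H⟩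
  obtain ⟨qG, cu, cv, hqGN, hqGprops, hqGstep, hqGconst⟩ := extract G hGseq
  obtain ⟨qH, du, dv, hqHN, hqHprops, hqHstep, hqHconst⟩ := extract H hHseq
  set n := Fintype.card V with hn
  set m := Fintype.card W with hm
  have hn1 : 1 ≤ n := Fintype.card_pos
  have hm1 : 1 ≤ m := Fintype.card_pos
  set K := strongProd G H with hK
  set z := qG 1 (Classical.arbitrary V) with hz
  have hzall : ∀ x, qG 1 x = z := fun x => hqGconst x _
  set eW : W ≃ Fin m := Fintype.equivFin W with heW
  set Q : ℕ → ℕ → V × W → V × W := fun i k η =>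
    ((if (eW η.2 : ℕ) < k then mergeP (qG (i+1)) (cu i) (cv i) else qG (i+1)) η.1, η.2) with hQ
  set PP : ℕ → V × W → V × W := fun t =>
    if t ≤ m then (fun η => (z, qH t η.2))
    else Q ((t-1)/m) (m * ((t-1)/m + 1) - t) with hPP
  -- basic Q computation lemmas
  have hQapp : ∀ i k x w, Q i k (x, w) =
      ((if (eW w : ℕ) < k then mergeP (qG (i+1)) (cu i) (cv i) else qG (i+1)) x, w) := by
    intro i k x w
    rw [hQ]
  have hQ0 : ∀ i (η : V × W), Q i 0 η = (qG (i+1) η.1, η.2) := by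
    intro i η
    obtain ⟨x, w⟩ := η
    rw [hQapp, if_neg (Nat.not_lt_zero _)]
  have hQm' : ∀ i, 1 ≤ i → i < n → ∀ η : V × W, Q i m η = (qG i η.1, η.2) := by
    intro i h1 h2 η
    obtain ⟨x, w⟩ := η
    obtain ⟨hfu, hfv, hne, hmerge⟩ := hqGstep i h1 h2
    rw [hQapp, if_pos (eW w).2, hmerge]
  have hQidem : ∀ i k, 1 ≤ i → i < n → ∀ η : V × W, Q i k (Q i k η) = Q i k η := by
    intro i k h1i h2i η
    obtain ⟨x, w⟩ := η
    obtain ⟨hfu, hfv, hne, -⟩ := hqGstep i h1i h2i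
    have hidem := (hqGprops (i+1) (by omega) (by omega)).1
    by_cases h1 : (eW w : ℕ) < k
    · rw [hQapp, if_pos h1, hQapp, if_pos h1, mergeP_idem hidem hfu hne]
    · rw [hQapp, if_neg h1, hQapp, if_neg h1, hidem]
  have hQfix : ∀ i k x w, qG (i+1) x = x → ¬ ((eW w : ℕ) < k) → Q i k (x, w) = (x, w) := by
    intro i k x w hx hw
    rw [hQapp, if_neg hw, hx]
  have hQstepEq : ∀ i k (hk : k < m), 1 ≤ i → i < n →
      Q i (k+1) = mergeP (Q i k) (cu i, eW.symm ⟨k, hk⟩) (cv i, eW.symm ⟨k, hk⟩) := by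
    intro i k hk h1i h2i
    obtain ⟨hfu, hfv, hne, -⟩ := hqGstep i h1i h2i
    funext η
    obtain ⟨x, w⟩ := η
    have hcol : ∀ (w' : W), w' = eW.symm ⟨k, hk⟩ ↔ (eW w' : ℕ) = k := by
      intro w'
      rw [Equiv.eq_symm_apply]
      constructor
      · intro h; rw [h]
      · intro h; exact Fin.ext h
    have hRHS : mergeP (Q i k) (cu i, eW.symm ⟨k, hk⟩) (cv i, eW.symm ⟨k, hk⟩) (x, w)
        = if Q i k (x, w) = (cv i, eW.symm ⟨k, hk⟩) then (cu i, eW.symm ⟨k, hk⟩)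
          else Q i k (x, w) := rfl
    rw [hRHS]
    by_cases h1 : (eW w : ℕ) < k
    · rw [hQapp, if_pos (show (eW w : ℕ) < k + 1 by omega), hQapp, if_pos h1, if_neg]
      intro hcontr
      exact mergeP_ne_v hne x (congrArg Prod.fst hcontr)
    by_cases h2 : (eW w : ℕ) = k
    · have hw : w = eW.symm ⟨k, hk⟩ := (hcol w).2 h2
      rw [hQapp, if_pos (show (eW w : ℕ) < k + 1 by omega), hQapp,
        if_neg (show ¬ ((eW w : ℕ) < k) by omega)]
      by_cases h3 : qG (i+1) x = cv i
      · rw [if_pos (show ((qG (i+1) x, w) : V × W) = (cv i, eW.symm ⟨k, hk⟩) by rw [h3, hw]),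
          mergeP_eq_u_of_eq_v h3, hw]
      · rw [if_neg (fun hcontr => h3 (congrArg Prod.fst hcontr)), mergeP_eq_of_ne_v h3]
    · rw [hQapp, if_neg (show ¬ ((eW w : ℕ) < k + 1) by omega), hQapp,
        if_neg (show ¬ ((eW w : ℕ) < k) by omega), if_neg]
      intro hcontr
      have hww : w = eW.symm ⟨k, hk⟩ := congrArg Prod.snd hcontr
      exact h2 ((hcol w).1 hww)
  -- characterization of PP in phase 1
  have hchar : ∀ t, m < t → t ≤ n*m → ∃ i k,
      1 ≤ i ∧ i < n ∧ k < m ∧ m*(i+1) - k = t ∧ PP t = Q i k := by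
    intro t h1t h2t
    set i := (t-1)/m with hidef
    set k := m * (i + 1) - t with hkdef
    have hb := Nat.div_add_mod (t-1) m
    rw [← hidef] at hb
    have hbm : (t-1) % m < m := Nat.mod_lt _ (by omega)
    have hmi : m * (i+1) = m * i + m := by ring
    have h1i : 1 ≤ i := by
      rw [hidef, Nat.one_le_div_iff (by omega)]
      omega
    have h2i : i < n := by
      rw [hidef, Nat.div_lt_iff_lt_mul (by omega)]
      omega
    refine ⟨i, k, h1i, h2i, by omega, by omega, ?_⟩
    rw [hPP]
    simp only
    rw [if_neg (by omega)]
  -- red degree bounds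
  have hdeg : ∀ t, 1 ≤ t → t ≤ n*m → Trigraph.RedDegLE (quotT K (PP t)) D := by
    intro t h1 h2
    by_cases ht : t ≤ m
    · have hb := phase2_red G H z (qH t) (hqHprops t h1 ht).1 (hqHprops t h1 ht).2
      have hPPt : PP t = fun η : V × W => (z, qH t η.2) := by
        rw [hPP]
        simp only
        rw [if_pos ht]
      rw [hPPt]
      exact fun x => le_trans (hb x) (le_max_right _ _)
    · obtain ⟨i, k, h1i, h2i, hk, -, hPPt⟩ := hchar t (by omega) h2
      obtain ⟨hfu, hfv, hne, hmerge⟩ := hqGstep i h1i h2i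
      have hidem := (hqGprops (i+1) (by omega) (by omega)).1
      have hdp := (hqGprops (i+1) (by omega) (by omega)).2
      have hdq : Trigraph.RedDegLE (quotT G (mergeP (qG (i+1)) (cu i) (cv i))) dG := by
        rw [← hmerge]
        exact (hqGprops i (by omega) (by omega)).2
      have hb := phase1_red G H (qG (i+1)) (cu i) (cv i) hidem hfu hfv hne hdp hdq
        (fun w => (eW w : ℕ) < k)
      rw [hPPt]
      exact fun x => le_trans (hb x) (le_max_left _ _)
  -- contraction steps
  have hstep : ∀ t, 1 ≤ t → t < n*m →
      Trigraph.IsContraction (quotT K (PP (t+1))) (quotT K (PP t)) := by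
    intro t h1 h2
    by_cases ht : t + 1 ≤ m
    · -- phase 2 step
      obtain ⟨hfu, hfv, hne, hmerge⟩ := hqHstep t h1 (by omega)
      have hPPt1 : PP (t+1) = fun η : V × W => (z, qH (t+1) η.2) := by
        rw [hPP]; simp only; rw [if_pos ht]
      have hPPt : PP t = fun η : V × W => (z, qH t η.2) := by
        rw [hPP]; simp only; rw [if_pos (by omega)]
      have hidem := (hqHprops (t+1) (by omega) ht).1
      refine ⟨(z, du t), (z, dv t), ?_⟩
      have heq : PP t = mergeP (PP (t+1)) (z, du t) (z, dv t) := by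
        funext η
        have eL : PP t η = (z, qH t η.2) := congrFun hPPt η
        have eP1 : PP (t+1) η = (z, qH (t+1) η.2) := congrFun hPPt1 η
        have eR : mergeP (PP (t+1)) (z, du t) (z, dv t) η
            = if PP (t+1) η = (z, dv t) then (z, du t) else PP (t+1) η := rfl
        rw [eL, eR, eP1, hmerge]
        by_cases hc : qH (t+1) η.2 = dv t
        · rw [if_pos (by rw [hc]), mergeP_eq_u_of_eq_v hc]
        · rw [if_neg (fun h => hc (congrArg Prod.snd h)), mergeP_eq_of_ne_v hc]
      have hPid : ∀ η, PP (t+1) (PP (t+1) η) = PP (t+1) η := by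
        intro η
        have e1 : PP (t+1) η = (z, qH (t+1) η.2) := congrFun hPPt1 η
        rw [e1]
        have e2 : PP (t+1) (z, qH (t+1) η.2) = (z, qH (t+1) (qH (t+1) η.2)) :=
          congrFun hPPt1 _
        rw [e2, hidem]
      have hfixa : PP (t+1) (z, du t) = (z, du t) := by
        have e1 : PP (t+1) (z, du t) = (z, qH (t+1) (du t)) := congrFun hPPt1 _
        rw [e1, hfu]
      have hfixb : PP (t+1) (z, dv t) = (z, dv t) := by
        have e1 : PP (t+1) (z, dv t) = (z, qH (t+1) (dv t)) := congrFun hPPt1 _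
        rw [e1, hfv]
      have hab : ((z, du t) : V × W) ≠ (z, dv t) := fun h => hne (congrArg Prod.snd h)
      have hcontr := quot_contract K hPid hfixa hfixb hab
      rw [← heq] at hcontr
      exact hcontr
    · -- phase 1 step
      have hmt : m ≤ t := by omega
      set i := t / m with hidef
      have hdm := Nat.div_add_mod t m
      rw [← hidef] at hdm
      have hr : t % m < m := Nat.mod_lt _ (by omega)
      have hmi : m * (i+1) = m * i + m := by ring
      have h1i : 1 ≤ i := by
        rw [hidef, Nat.one_le_div_iff (by omega)]
        omega
      have h2i : i < n := by
        rw [hidef, Nat.div_lt_iff_lt_mul (by omega)]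
        omega
      set k1 := m * (i + 1) - (t+1) with hk1def
      have hk1 : k1 < m := by omega
      obtain ⟨hfu, hfv, hne, hmerge⟩ := hqGstep i h1i h2i
      have hPPt1 : PP (t+1) = Q i k1 := by
        rw [hPP]
        simp only
        rw [if_neg (by omega : ¬ (t+1 ≤ m)), Nat.add_sub_cancel, ← hidef, ← hk1def]
      have hPPt : PP t = Q i (k1 + 1) := by
        by_cases hr0 : t % m = 0
        · have htmi : t = m * i := by omega
          by_cases hi1 : i = 1
          · have hmieq : m * i = m := by rw [hi1, mul_one]
            have htm : t = m := by omega
            have hk1m : k1 + 1 = m := by omega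
            rw [htm, hk1m]
            have hPm : PP m = fun η : V × W => (z, qH m η.2) := by
              rw [hPP]; simp only; rw [if_pos le_rfl]
            rw [hPm]
            funext η
            rw [hQm' i h1i h2i η, hqHN η.2, hi1, hzall η.1]
          · have h2le : 2 ≤ i := by omega
            have e7 : (i - 1) + 1 = i := by omega
            have e6 : m * ((i-1)+1) = m * i := by rw [e7]
            have e2 : m * ((i-1)+1) = m * (i-1) + m := by ring
            have e3 : (i-1) * m = m * (i-1) := by ring
            have h8 : m * 1 ≤ m * (i-1) := Nat.mul_le_mul_left m (by omega)
            have h9 : m * 1 = m := by ring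
            have htm : m < t := by omega
            have hdiv : (t-1)/m = i - 1 := by
              apply Nat.div_eq_of_lt_le
              · omega
              · have e5 : (i - 1 + 1) * m = m * (i-1) + m := by ring
                omega
            have hQj0 : m * ((i - 1) + 1) - t = 0 := by omega
            have hk1m : k1 + 1 = m := by omega
            rw [hPP]
            simp only
            rw [if_neg (by omega), hdiv, hQj0, hk1m]
            funext η
            rw [hQ0 (i-1) η, e7, hQm' i h1i h2i η]
        · have htm : m < t := by
            have h5 : m * 1 ≤ m * i := Nat.mul_le_mul_left m h1i
            have h6 : m * 1 = m := by ring
            omega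
          have hdiv : (t-1)/m = i := by
            apply Nat.div_eq_of_lt_le
            · have e3 : i * m = m * i := by ring
              omega
            · have e4 : (i+1) * m = m * i + m := by ring
              omega
          have hkk : m * (i+1) - t = k1 + 1 := by omega
          rw [hPP]
          simp only
          rw [if_neg (by omega), hdiv, hkk]
      set col : W := eW.symm ⟨k1, hk1⟩ with hcol
      have hcolval : ¬ ((eW col : ℕ) < k1) := by
        rw [hcol, Equiv.apply_symm_apply]
        simp
      refine ⟨(cu i, col), (cv i, col), ?_⟩
      have heq : PP t = mergeP (PP (t+1)) (cu i, col) (cv i, col) := by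
        rw [hPPt, hPPt1, hQstepEq i k1 hk1 h1i h2i, hcol]
      have hPid : ∀ η, PP (t+1) (PP (t+1) η) = PP (t+1) η := by
        intro η
        rw [hPPt1]
        exact hQidem i k1 h1i h2i η
      have hfixa : PP (t+1) (cu i, col) = (cu i, col) := by
        rw [hPPt1]
        exact hQfix i k1 (cu i) col hfu hcolval
      have hfixb : PP (t+1) (cv i, col) = (cv i, col) := by
        rw [hPPt1]
        exact hQfix i k1 (cv i) col hfv hcolval
      have hab : ((cu i, col) : V × W) ≠ (cv i, col) := fun h => hne (congrArg Prod.fst h)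
      have hcontr := quot_contract K hPid hfixa hfixb hab
      rw [← heq] at hcontr
      exact hcontr
  -- assemble the sequence
  have hcard : ((strongProd G H).toTrigraph).verts.card = n * m := by
    rw [toTrigraph_card]
    exact Fintype.card_prod V W
  have hnm1 : 1 ≤ n * m := Nat.mul_pos (by omega) (by omega)
  apply Nat.sInf_le
  show Trigraph.HasSeq (strongProd G H).toTrigraph D
  refine ⟨fun t => quotT K (PP t), ?_, ?_, ?_⟩
  · show quotT K (PP (((strongProd G H).toTrigraph).verts.card)) = _
    rw [hcard]
    by_cases hn2 : n = 1
    · have hnm : n * m = m := by rw [hn2, one_mul]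
      rw [hnm]
      have hPm : ∀ η : V × W, PP m η = id η := by
        intro η
        have e1 : PP m η = (z, qH m η.2) := by
          rw [hPP]; simp only; rw [if_pos le_rfl]
        have hone : ∀ x y : V, x = y := by
          intro x y
          exact Fintype.card_le_one_iff.1 (le_of_eq hn2) x y
        rw [e1, hqHN η.2, hone z η.1]
        rfl
      exact (quotT_congr K hPm).trans (quotT_id K)
    · have h2n : 2 ≤ n := by omega
      have hmlt : m < n * m := by
        have h5 : m * 2 ≤ m * n := Nat.mul_le_mul_left m h2n
        have h6 : m * 2 = m + m := by ring
        have h7 : m * n = n * m := by ring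
        omega
      obtain ⟨i, k, h1i, h2i, hk, ht1, hPPt⟩ := hchar (n*m) hmlt le_rfl
      have e1 : m * (i+1) ≤ m * n := Nat.mul_le_mul_left m (by omega)
      have e2 : m * n = n * m := by ring
      have hk0 : k = 0 := by omega
      have hieq : m * (i+1) = m * n := by omega
      have hin : i + 1 = n := Nat.eq_of_mul_eq_mul_left (by omega) hieq
      rw [hPPt, hk0]
      refine (quotT_congr K (q := id) ?_).trans (quotT_id K)
      intro η
      rw [hQ0 i η, hin, hqGN η.1]
      rfl
  · intro t h1 h2
    rw [hcard] at h2
    exact hstep t h1 h2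
  · intro t h1 h2
    rw [hcard] at h2
    exact hdeg t h1 h2
end

section
/- Let H be a finite simple graph and let G be any trigraph on the same vertex set with E(G) ∪ R(G) = E(H) (that is, G is obtained from H by recoloring an arbitrary subset of its edges red). Then tww(G) ≤ tww(H) + Δ(H), where Δ(H) is the maximum degree of H. -/
section AuxTww

open Trigraph

variable {V : Type*} [DecidableEq V]

/-! ### An explicit contraction, to show every trigraph admits some sequence -/

def contractAt (T : Trigraph V) (u v : V) : Trigraph V where
  verts := T.verts.erase v
  black x y := x ∈ T.verts.erase v ∧ y ∈ T.verts.erase v ∧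
    ((x ≠ u ∧ y ≠ u ∧ T.black x y) ∨
     (x = u ∧ y ≠ u ∧ T.black u y ∧ T.black v y) ∨
     (y = u ∧ x ≠ u ∧ T.black u x ∧ T.black v x))
  red x y := x ∈ T.verts.erase v ∧ y ∈ T.verts.erase v ∧
    ((x ≠ u ∧ y ≠ u ∧ T.red x y) ∨
     (x = u ∧ y ≠ u ∧ (T.black u y ∨ T.red u y ∨ T.black v y ∨ T.red v y) ∧
        ¬ (T.black u y ∧ T.black v y)) ∨
     (y = u ∧ x ≠ u ∧ (T.black u x ∨ T.red u x ∨ T.black v x ∨ T.red v x) ∧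
        ¬ (T.black u x ∧ T.black v x)))
  black_symm := by
    rintro a b ⟨ha, hb, h | h | h⟩
    · exact ⟨hb, ha, Or.inl ⟨h.2.1, h.1, T.black_symm _ _ h.2.2⟩⟩
    · exact ⟨hb, ha, Or.inr (Or.inr ⟨h.1, h.2.1, h.2.2.1, h.2.2.2⟩)⟩
    · exact ⟨hb, ha, Or.inr (Or.inl ⟨h.1, h.2.1, h.2.2.1, h.2.2.2⟩)⟩
  red_symm := by
    rintro a b ⟨ha, hb, h | h | h⟩
    · exact ⟨hb, ha, Or.inl ⟨h.2.1, h.1, T.red_symm _ _ h.2.2⟩⟩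
    · exact ⟨hb, ha, Or.inr (Or.inr ⟨h.1, h.2.1, h.2.2.1, h.2.2.2⟩)⟩
    · exact ⟨hb, ha, Or.inr (Or.inl ⟨h.1, h.2.1, h.2.2.1, h.2.2.2⟩)⟩
  black_irrefl := by
    rintro a ⟨-, -, h | h | h⟩
    · exact T.black_irrefl a h.2.2
    · exact h.2.1 h.1
    · exact h.2.1 h.1
  red_irrefl := by
    rintro a ⟨-, -, h | h | h⟩
    · exact T.red_irrefl a h.2.2
    · exact h.2.1 h.1
    · exact h.2.1 h.1
  black_red_disjoint := by
    rintro a b ⟨-, -, hb⟩ ⟨-, -, hr⟩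
    have := T.black_red_disjoint a b
    tauto
  black_mem := by
    rintro a b ⟨ha, hb, -⟩
    exact ⟨ha, hb⟩
  red_mem := by
    rintro a b ⟨ha, hb, -⟩
    exact ⟨ha, hb⟩

lemma contractAt_is {T : Trigraph V} {u v : V} (hu : u ∈ T.verts) (hv : v ∈ T.verts)
    (huv : u ≠ v) : IsContractionAt T (contractAt T u v) u v := by
  refine ⟨hu, hv, huv, rfl, ?_, ?_, ?_, ?_⟩
  · intro x y hxu hyu
    show (x ∈ T.verts.erase v ∧ y ∈ T.verts.erase v ∧ _) ↔ _
    have h1 := T.black_mem x y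
    simp only [Finset.mem_erase]
    tauto
  · intro x y hxu hyu
    show (x ∈ T.verts.erase v ∧ y ∈ T.verts.erase v ∧ _) ↔ _
    have h1 := T.red_mem x y
    simp only [Finset.mem_erase]
    tauto
  · intro x hxu hxv
    constructor
    · rintro ⟨-, -, h | h | h⟩
      · exact absurd rfl h.1
      · exact ⟨h.2.2.1, h.2.2.2⟩
      · exact absurd h.1 hxu
    · rintro ⟨hb1, hb2⟩
      exact ⟨Finset.mem_erase.mpr ⟨huv, hu⟩,
        Finset.mem_erase.mpr ⟨hxv, (T.black_mem u x hb1).2⟩,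
        Or.inr (Or.inl ⟨rfl, hxu, hb1, hb2⟩)⟩
  · intro x hxu hxv
    constructor
    · rintro ⟨-, -, h | h | h⟩
      · exact absurd rfl h.1
      · exact ⟨h.2.2.1, h.2.2.2⟩
      · exact absurd h.1 hxu
    · rintro ⟨hd, hn⟩
      have hxs : x ∈ T.verts := by
        rcases hd with h | h | h | h
        exacts [(T.black_mem u x h).2, (T.red_mem u x h).2,
          (T.black_mem v x h).2, (T.red_mem v x h).2]
      exact ⟨Finset.mem_erase.mpr ⟨huv, hu⟩, Finset.mem_erase.mpr ⟨hxv, hxs⟩,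
        Or.inr (Or.inl ⟨rfl, hxu, hd, hn⟩)⟩

lemma redDeg_le_card [Fintype V] (T : Trigraph V) (x : V) :
    T.redDeg x ≤ Fintype.card V := by
  show {y | T.red x y}.ncard ≤ _
  have := Set.ncard_le_ncard (Set.subset_univ {y | T.red x y}) (Set.toFinite _)
  rwa [Set.ncard_univ, Nat.card_eq_fintype_card] at this

lemma exists_seq_aux [Fintype V] :
    ∀ m (T : Trigraph V), T.verts.card = m → T.HasSeq (Fintype.card V) := by
  intro m
  induction m with
  | zero =>
    intro T hT
    refine ⟨fun _ => T, rfl, ?_, fun i _ _ x => redDeg_le_card T x⟩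
    intro i h1 h2; rw [hT] at h2; omega
  | succ m ih =>
    intro T hT
    by_cases hm : m = 0
    · subst hm
      refine ⟨fun _ => T, rfl, ?_, fun i _ _ x => redDeg_le_card T x⟩
      intro i h1 h2; rw [hT] at h2; omega
    · obtain ⟨u, hu, v, hv, huv⟩ := Finset.one_lt_card.mp (by omega : 1 < T.verts.card)
      have hca := contractAt_is hu hv huv
      have hcard : (contractAt T u v).verts.card = m := by
        show (T.verts.erase v).card = m
        rw [Finset.card_erase_of_mem hv, hT]
        omega
      obtain ⟨f, h1, h2', h3⟩ := ih (contractAt T u v) hcard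
      rw [hcard] at h1 h2' h3
      refine ⟨fun i => if i = m + 1 then T else f i, by rw [hT]; simp, ?_,
        fun i _ _ => by dsimp only; split_ifs <;> exact fun x => redDeg_le_card _ x⟩
      intro i hi1 hi2
      rw [hT] at hi2
      dsimp only
      by_cases him : i = m
      · rw [him, if_pos rfl, if_neg (by omega : ¬ m = m + 1), h1]
        exact ⟨u, v, hca⟩
      · rw [if_neg (by omega : ¬ i + 1 = m + 1), if_neg (by omega : ¬ i = m + 1)]
        exact h2' i hi1 (by omega)

/-! ### Class-tracking machinery -/

def AllR (r : V → V → Prop) (p : V → V) (x y : V) : Prop :=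
  ∀ a b, p a = x → p b = y → r a b

def ExR (r : V → V → Prop) (p : V → V) (x y : V) : Prop :=
  ∃ a b, p a = x ∧ p b = y ∧ r a b

lemma allR_symm {r : V → V → Prop} (hr : ∀ a b, r a b → r b a) {p : V → V} {x y : V}
    (h : AllR r p x y) : AllR r p y x :=
  fun a b ha hb => hr _ _ (h b a hb ha)

lemma exR_symm {r : V → V → Prop} (hr : ∀ a b, r a b → r b a) {p : V → V} {x y : V}
    (h : ExR r p x y) : ExR r p y x := by
  obtain ⟨a, b, ha, hb, hab⟩ := h
  exact ⟨b, a, hb, ha, hr _ _ hab⟩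

def pupd (p : V → V) (u v : V) : V → V := fun a => if p a = v then u else p a

lemma pupd_eq_iff {p : V → V} {u v x : V} (hxu : x ≠ u) (hxv : x ≠ v) (a : V) :
    pupd p u v a = x ↔ p a = x := by
  unfold pupd
  split_ifs with h
  · constructor
    · intro he; exact absurd he.symm hxu
    · intro he; rw [h] at he; exact absurd he.symm hxv
  · exact Iff.rfl

lemma pupd_eq_u_iff {p : V → V} {u v : V} (huv : u ≠ v) (a : V) :
    pupd p u v a = u ↔ (p a = u ∨ p a = v) := by
  unfold pupd
  split_ifs with h
  · simp [h]
  · simp [h]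

lemma allR_pupd_iff {r : V → V → Prop} {p : V → V} {u v x y : V}
    (hxu : x ≠ u) (hxv : x ≠ v) (hyu : y ≠ u) (hyv : y ≠ v) :
    AllR r (pupd p u v) x y ↔ AllR r p x y := by
  constructor <;> intro h a b ha hb
  · exact h a b ((pupd_eq_iff hxu hxv a).mpr ha) ((pupd_eq_iff hyu hyv b).mpr hb)
  · exact h a b ((pupd_eq_iff hxu hxv a).mp ha) ((pupd_eq_iff hyu hyv b).mp hb)

lemma allR_pupd_u_iff {r : V → V → Prop} {p : V → V} {u v y : V}
    (huv : u ≠ v) (hyu : y ≠ u) (hyv : y ≠ v) :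
    AllR r (pupd p u v) u y ↔ (AllR r p u y ∧ AllR r p v y) := by
  constructor
  · intro h
    constructor <;> intro a b ha hb
    · exact h a b ((pupd_eq_u_iff huv a).mpr (Or.inl ha)) ((pupd_eq_iff hyu hyv b).mpr hb)
    · exact h a b ((pupd_eq_u_iff huv a).mpr (Or.inr ha)) ((pupd_eq_iff hyu hyv b).mpr hb)
  · rintro ⟨h1, h2⟩ a b ha hb
    rcases (pupd_eq_u_iff huv a).mp ha with h | h
    · exact h1 a b h ((pupd_eq_iff hyu hyv b).mp hb)
    · exact h2 a b h ((pupd_eq_iff hyu hyv b).mp hb)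

lemma exR_pupd_iff {r : V → V → Prop} {p : V → V} {u v x y : V}
    (hxu : x ≠ u) (hxv : x ≠ v) (hyu : y ≠ u) (hyv : y ≠ v) :
    ExR r (pupd p u v) x y ↔ ExR r p x y := by
  constructor <;> rintro ⟨a, b, ha, hb, hab⟩
  · exact ⟨a, b, (pupd_eq_iff hxu hxv a).mp ha, (pupd_eq_iff hyu hyv b).mp hb, hab⟩
  · exact ⟨a, b, (pupd_eq_iff hxu hxv a).mpr ha, (pupd_eq_iff hyu hyv b).mpr hb, hab⟩

lemma exR_pupd_u_iff {r : V → V → Prop} {p : V → V} {u v y : V}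
    (huv : u ≠ v) (hyu : y ≠ u) (hyv : y ≠ v) :
    ExR r (pupd p u v) u y ↔ (ExR r p u y ∨ ExR r p v y) := by
  constructor
  · rintro ⟨a, b, ha, hb, hab⟩
    rcases (pupd_eq_u_iff huv a).mp ha with h | h
    · exact Or.inl ⟨a, b, h, (pupd_eq_iff hyu hyv b).mp hb, hab⟩
    · exact Or.inr ⟨a, b, h, (pupd_eq_iff hyu hyv b).mp hb, hab⟩
  · rintro (⟨a, b, ha, hb, hab⟩ | ⟨a, b, ha, hb, hab⟩)
    · exact ⟨a, b, (pupd_eq_u_iff huv a).mpr (Or.inl ha), (pupd_eq_iff hyu hyv b).mpr hb, hab⟩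
    · exact ⟨a, b, (pupd_eq_u_iff huv a).mpr (Or.inr ha), (pupd_eq_iff hyu hyv b).mpr hb, hab⟩

/-! ### The parallel trigraph built from `G` along a class map `p` -/

def Qt (G : Trigraph V) (H : SimpleGraph V) (p : V → V) (s : Finset V) : Trigraph V where
  verts := s
  black x y := x ∈ s ∧ y ∈ s ∧ x ≠ y ∧ AllR G.black p x y
  red x y := x ∈ s ∧ y ∈ s ∧ x ≠ y ∧ ExR H.Adj p x y ∧ ¬ AllR G.black p x y
  black_symm := by
    rintro a b ⟨ha, hb, hne, h⟩
    exact ⟨hb, ha, hne.symm, allR_symm G.black_symm h⟩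
  red_symm := by
    rintro a b ⟨ha, hb, hne, he, hn⟩
    exact ⟨hb, ha, hne.symm, exR_symm (fun _ _ h => h.symm) he,
      fun h => hn (allR_symm G.black_symm h)⟩
  black_irrefl := by rintro a ⟨-, -, hne, -⟩; exact hne rfl
  red_irrefl := by rintro a ⟨-, -, hne, -⟩; exact hne rfl
  black_red_disjoint := by rintro a b ⟨-, -, -, h⟩ ⟨-, -, -, -, hn⟩; exact hn h
  black_mem := by rintro a b ⟨ha, hb, -⟩; exact ⟨ha, hb⟩
  red_mem := by rintro a b ⟨ha, hb, -⟩; exact ⟨ha, hb⟩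

lemma Qt_black {G : Trigraph V} {H : SimpleGraph V} {p : V → V} {s : Finset V} {x y : V} :
    (Qt G H p s).black x y ↔ (x ∈ s ∧ y ∈ s ∧ x ≠ y ∧ AllR G.black p x y) := Iff.rfl

lemma Qt_red {G : Trigraph V} {H : SimpleGraph V} {p : V → V} {s : Finset V} {x y : V} :
    (Qt G H p s).red x y ↔
      (x ∈ s ∧ y ∈ s ∧ x ≠ y ∧ ExR H.Adj p x y ∧ ¬ AllR G.black p x y) := Iff.rfl

set_option maxHeartbeats 1000000 in
lemma qt_contract (G : Trigraph V) (H : SimpleGraph V) {p : V → V} {s : Finset V} {u v : V}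
    (hedges : ∀ x y, (G.black x y ∨ G.red x y) ↔ H.Adj x y)
    (hfix : ∀ x ∈ s, p x = x) (hu : u ∈ s) (hv : v ∈ s) (huv : u ≠ v) :
    IsContractionAt (Qt G H p s) (Qt G H (pupd p u v) (s.erase v)) u v := by
  have key : ∀ w x, w ∈ s → x ∈ s → AllR G.black p w x → ExR H.Adj p w x := by
    intro w x hw hx h
    exact ⟨w, x, hfix w hw, hfix x hx,
      (hedges w x).mp (Or.inl (h w x (hfix w hw) (hfix x hx)))⟩
  refine ⟨hu, hv, huv, rfl, ?_, ?_, ?_, ?_⟩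
  · intro x y hxu hyu
    clear key
    by_cases hxv : x = v
    · subst hxv; simp [Qt_black, Finset.mem_erase]
    by_cases hyv : y = v
    · subst hyv; simp [Qt_black, Finset.mem_erase]
    simp only [Qt_black, Finset.mem_erase, allR_pupd_iff hxu hxv hyu hyv]
    clear hedges hfix
    tauto
  · intro x y hxu hyu
    clear key
    by_cases hxv : x = v
    · subst hxv; simp [Qt_red, Finset.mem_erase]
    by_cases hyv : y = v
    · subst hyv; simp [Qt_red, Finset.mem_erase]
    simp only [Qt_red, Finset.mem_erase, allR_pupd_iff hxu hxv hyu hyv,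
      exR_pupd_iff hxu hxv hyu hyv]
    clear hedges hfix
    tauto
  · intro x hxu hxv
    clear key hedges hfix
    have hvx : v ≠ x := fun h => hxv h.symm
    simp only [Qt_black, Finset.mem_erase, allR_pupd_u_iff huv hxu hxv]
    tauto
  · intro x hxu hxv
    have hvx : v ≠ x := fun h => hxv h.symm
    have hux : u ≠ x := fun h => hxu h.symm
    by_cases hxs : x ∈ s
    · have k1 := key u x hu hxs
      have k2 := key v x hv hxs
      clear key hedges hfix
      simp only [Qt_red, Qt_black, Finset.mem_erase, allR_pupd_u_iff huv hxu hxv,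
        exR_pupd_u_iff huv hxu hxv]
      tauto
    · clear key hedges hfix
      simp only [Qt_red, Qt_black, Finset.mem_erase, hxs]
      tauto

/-! ### The invariant along the sequence of `H` -/

def ClassInv (H : SimpleGraph V) (T : Trigraph V) (p : V → V) : Prop :=
  (∀ x ∈ T.verts, p x = x) ∧
  (∀ x y, T.black x y → AllR H.Adj p x y) ∧
  (∀ x y, x ∈ T.verts → y ∈ T.verts → x ≠ y → ExR H.Adj p x y → T.black x y ∨ T.red x y)

lemma inv_base {V : Type*} [Fintype V] [DecidableEq V] (H : SimpleGraph V) :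
    ClassInv H H.toTrigraph id := by
  refine ⟨fun x _ => rfl, ?_, ?_⟩
  · rintro x y ⟨hadj, -, -⟩ a b ha hb
    simp only [id] at ha hb
    subst ha; subst hb; exact hadj
  · rintro x y - - - ⟨a, b, ha, hb, hab⟩
    simp only [id] at ha hb
    subst ha; subst hb
    exact Or.inl ⟨hab, Finset.mem_univ _, Finset.mem_univ _⟩

lemma inv_step {H : SimpleGraph V} {T T' : Trigraph V} {p : V → V} {u v : V}
    (hI : ClassInv H T p) (hc : IsContractionAt T T' u v) : ClassInv H T' (pupd p u v) := by
  obtain ⟨hfix, hI2, hI3⟩ := hI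
  obtain ⟨hu, hv, huv, hV, hb2, hr2, hb1, hr1⟩ := hc
  have key : ∀ y, y ≠ u → y ≠ v → y ∈ T.verts → ExR H.Adj (pupd p u v) u y →
      T'.black u y ∨ T'.red u y := by
    intro y hyu hyv hys hex
    have hex' := (exR_pupd_u_iff huv hyu hyv).mp hex
    have hD : (T.black u y ∨ T.red u y) ∨ (T.black v y ∨ T.red v y) := by
      rcases hex' with h | h
      · exact Or.inl (hI3 u y hu hys (Ne.symm hyu) h)
      · exact Or.inr (hI3 v y hv hys (Ne.symm hyv) h)
    by_cases hbb : T.black u y ∧ T.black v y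
    · exact Or.inl ((hb1 y hyu hyv).mpr hbb)
    · refine Or.inr ((hr1 y hyu hyv).mpr ⟨?_, hbb⟩)
      tauto
  refine ⟨?_, ?_, ?_⟩
  · intro x hx
    rw [hV, Finset.mem_erase] at hx
    unfold pupd
    rw [hfix x hx.2, if_neg hx.1]
  · intro x y hb
    have hmem := T'.black_mem x y hb
    simp only [hV, Finset.mem_erase] at hmem
    obtain ⟨⟨hxv, hxs⟩, ⟨hyv, hys⟩⟩ := hmem
    by_cases hxu : x = u
    · by_cases hyu : y = u
      · rw [hxu, hyu] at hb
        exact absurd hb (T'.black_irrefl u)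
      · rw [hxu] at hb ⊢
        have h := (hb1 y hyu hyv).mp hb
        exact (allR_pupd_u_iff huv hyu hyv).mpr ⟨hI2 u y h.1, hI2 v y h.2⟩
    · by_cases hyu : y = u
      · have hb' := T'.black_symm _ _ hb
        rw [hyu] at hb'
        have h := (hb1 x hxu hxv).mp hb'
        rw [hyu]
        exact allR_symm (fun _ _ hab => hab.symm)
          ((allR_pupd_u_iff huv hxu hxv).mpr ⟨hI2 u x h.1, hI2 v x h.2⟩)
      · have h := (hb2 x y hxu hyu).mp hb
        exact (allR_pupd_iff hxu hxv hyu hyv).mpr (hI2 x y h.1)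
  · intro x y hx hy hne hex
    rw [hV, Finset.mem_erase] at hx hy
    by_cases hxu : x = u
    · by_cases hyu : y = u
      · exact absurd (hxu.trans hyu.symm) hne
      · rw [hxu] at hex ⊢
        exact key y hyu hy.1 hy.2 hex
    · by_cases hyu : y = u
      · have hex' := exR_symm (fun _ _ hab => hab.symm) hex
        rw [hyu] at hex'
        rcases key x hxu hx.1 hx.2 hex' with h | h
        · rw [hyu]; exact Or.inl (T'.black_symm _ _ h)
        · rw [hyu]; exact Or.inr (T'.red_symm _ _ h)
      · have hex' := (exR_pupd_iff hxu hx.1 hyu hy.1).mp hex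
        rcases hI3 x y hx.2 hy.2 hne hex' with h | h
        · exact Or.inl ((hb2 x y hxu hyu).mpr ⟨h, hx.1, hy.1⟩)
        · exact Or.inr ((hr2 x y hxu hyu).mpr ⟨h, hx.1, hy.1⟩)

lemma qt_redDegLE {V : Type*} [Fintype V] [DecidableEq V] {G T : Trigraph V}
    {H : SimpleGraph V} {p : V → V} {d : ℕ}
    (hI : ClassInv H T p) (hd : T.RedDegLE d) :
    (Qt G H p T.verts).RedDegLE (d + maxDeg H) := by
  obtain ⟨hfix, hI2, hI3⟩ := hI
  intro x
  have hsub : {y | (Qt G H p T.verts).red x y} ⊆ {y | T.red x y} ∪ {y | H.Adj x y} := by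
    rintro y ⟨hx, hy, hne, hex, hnb⟩
    rcases hI3 x y hx hy hne hex with h | h
    · exact Or.inr (hI2 x y h x y (hfix x hx) (hfix y hy))
    · exact Or.inl h
  calc (Qt G H p T.verts).redDeg x
      ≤ ({y | T.red x y} ∪ {y | H.Adj x y}).ncard :=
        Set.ncard_le_ncard hsub (Set.toFinite _)
    _ ≤ {y | T.red x y}.ncard + {y | H.Adj x y}.ncard := Set.ncard_union_le _ _
    _ ≤ d + maxDeg H := by
        refine Nat.add_le_add (hd x) ?_
        unfold maxDeg
        exact Finset.le_sup (f := fun v => {u | H.Adj v u}.ncard) (Finset.mem_univ x)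

lemma tri_ext {T1 T2 : Trigraph V} (h1 : T1.verts = T2.verts)
    (h2 : ∀ x y, T1.black x y ↔ T2.black x y) (h3 : ∀ x y, T1.red x y ↔ T2.red x y) :
    T1 = T2 := by
  cases T1; cases T2
  simp only at h1 h2 h3
  obtain rfl := h1
  obtain rfl : _ = _ := funext fun x => funext fun y => propext (h2 x y)
  obtain rfl : _ = _ := funext fun x => funext fun y => propext (h3 x y)
  rfl

lemma qt_id {V : Type*} [Fintype V] [DecidableEq V] (G : Trigraph V) (H : SimpleGraph V)
    (hverts : G.verts = Finset.univ)
    (hedges : ∀ u v, (G.black u v ∨ G.red u v) ↔ H.Adj u v) :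
    Qt G H id Finset.univ = G := by
  refine tri_ext hverts.symm ?_ ?_
  · intro x y
    rw [Qt_black]
    constructor
    · rintro ⟨-, -, -, h⟩; exact h x y rfl rfl
    · intro h
      refine ⟨Finset.mem_univ _, Finset.mem_univ _,
        fun he => G.black_irrefl x (he ▸ h), ?_⟩
      intro a b ha hb
      simp only [id] at ha hb
      subst ha; subst hb; exact h
  · intro x y
    rw [Qt_red]
    constructor
    · rintro ⟨-, -, hne, ⟨a, b, ha, hb, hab⟩, hnb⟩
      simp only [id] at ha hb
      subst ha; subst hb
      rcases (hedges a b).mpr hab with h | h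
      · exact absurd (fun a' b' ha' hb' => by
          simp only [id] at ha' hb'; subst ha'; subst hb'; exact h) hnb
      · exact h
    · intro h
      have hadj := (hedges x y).mp (Or.inr h)
      refine ⟨Finset.mem_univ _, Finset.mem_univ _,
        fun he => G.red_irrefl x (he ▸ h), ⟨x, y, rfl, rfl, hadj⟩, ?_⟩
      intro hA
      exact G.black_red_disjoint x y (hA x y rfl rfl) h

/-! ### Building the sequence for `G` -/

open scoped Classical in
noncomputable def nextP (A B : Trigraph V) (p : V → V) : V → V :=
  if h : Trigraph.IsContraction A B then pupd p h.choose h.choose_spec.choose else p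

noncomputable def Pk (f : ℕ → Trigraph V) (n : ℕ) : ℕ → (V → V)
  | 0 => id
  | k + 1 => nextP (f (n - k)) (f (n - k - 1)) (Pk f n k)

lemma hasSeq_of {V : Type*} [Fintype V] [DecidableEq V] (G : Trigraph V) (H : SimpleGraph V)
    (hverts : G.verts = Finset.univ)
    (hedges : ∀ u v, (G.black u v ∨ G.red u v) ↔ H.Adj u v)
    {d : ℕ} (hH : H.toTrigraph.HasSeq d) : G.HasSeq (d + maxDeg H) := by
  obtain ⟨f, hfn, hstep, hdeg⟩ := hH
  obtain ⟨n, hn⟩ : ∃ n, H.toTrigraph.verts.card = n := ⟨_, rfl⟩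
  rw [hn] at hfn hstep hdeg
  have hGcard : G.verts.card = n := by rw [hverts, ← hn]; rfl
  set P : ℕ → (V → V) := fun i => Pk f n (n - i) with hP
  have hPn : P n = id := by simp [hP, Pk]
  have hPstep : ∀ i, i < n → P i = nextP (f (i + 1)) (f i) (P (i + 1)) := by
    intro i hi
    show Pk f n (n - i) = nextP (f (i + 1)) (f i) (Pk f n (n - (i + 1)))
    rw [show n - i = (n - (i + 1)) + 1 from by omega]
    show nextP (f (n - (n - (i + 1)))) (f (n - (n - (i + 1)) - 1)) _ = _
    rw [show n - (n - (i + 1)) = i + 1 from by omega]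
    norm_num
  have hInvAux : ∀ j i, 1 ≤ i → i + j = n → ClassInv H (f i) (P i) := by
    intro j
    induction j with
    | zero =>
      intro i h1 h2
      obtain rfl : i = n := by omega
      rw [hfn, hPn]
      exact inv_base H
    | succ j ih =>
      intro i h1 h2
      have hilt : i < n := by omega
      have hc : Trigraph.IsContraction (f (i + 1)) (f i) := hstep i h1 hilt
      have hIH : ClassInv H (f (i + 1)) (P (i + 1)) := ih (i + 1) (by omega) (by omega)
      have hPi : P i = pupd (P (i + 1)) hc.choose hc.choose_spec.choose := by
        rw [hPstep i hilt]; unfold nextP; rw [dif_pos hc]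
      rw [hPi]
      exact inv_step hIH hc.choose_spec.choose_spec
  refine ⟨fun i => Qt G H (P i) ((f i).verts), ?_, ?_, ?_⟩
  · show Qt G H (P G.verts.card) ((f G.verts.card).verts) = G
    rw [hGcard, hfn, hPn]
    exact qt_id G H hverts hedges
  · intro i h1 h2
    rw [hGcard] at h2
    show Trigraph.IsContraction (Qt G H (P (i + 1)) ((f (i + 1)).verts))
      (Qt G H (P i) ((f i).verts))
    have hc : Trigraph.IsContraction (f (i + 1)) (f i) := hstep i h1 h2
    have hca := hc.choose_spec.choose_spec
    have hIH : ClassInv H (f (i + 1)) (P (i + 1)) :=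
      hInvAux (n - (i + 1)) (i + 1) (by omega) (by omega)
    have hPi : P i = pupd (P (i + 1)) hc.choose hc.choose_spec.choose := by
      rw [hPstep i h2]; unfold nextP; rw [dif_pos hc]
    refine ⟨hc.choose, hc.choose_spec.choose, ?_⟩
    have hVe : (f i).verts = (f (i + 1)).verts.erase hc.choose_spec.choose := hca.2.2.2.1
    rw [hPi, hVe]
    exact qt_contract G H hedges hIH.1 hca.1 hca.2.1 hca.2.2.1
  · intro i h1 h2
    rw [hGcard] at h2
    show (Qt G H (P i) ((f i).verts)).RedDegLE (d + maxDeg H)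
    exact qt_redDegLE (hInvAux (n - i) i h1 (by omega)) (hdeg i h1 h2)

end AuxTww


/-- any trigraph obtained from a simple graph `H` by recoloring some of its edges
red has twin-width at most `tww(H) + Δ(H)`. -/
theorem twin_width_trigraph_over_graph {V : Type*} [Fintype V] [DecidableEq V]
    (H : SimpleGraph V) (G : Trigraph V)
    (hverts : G.verts = Finset.univ)
    (hedges : ∀ u v, (G.black u v ∨ G.red u v) ↔ H.Adj u v) :
    Trigraph.tww G ≤ Trigraph.tww H.toTrigraph + maxDeg H := by
  have hne : H.toTrigraph.HasSeq (Fintype.card V) :=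
    exists_seq_aux (H.toTrigraph.verts.card) H.toTrigraph rfl
  have h0 : H.toTrigraph.HasSeq (Trigraph.tww H.toTrigraph) :=
    Nat.sInf_mem (⟨Fintype.card V, hne⟩ : {d | H.toTrigraph.HasSeq d}.Nonempty)
  exact Nat.sInf_le (hasSeq_of G H hverts hedges h0)
end

section
/- For all integers d ≥ 0, k ≥ 1 and n ≥ 2: if the k-subdivision K_n^{(k)} of the complete graph K_n has twin-width at most d, then (d+1)^{k+1} ≥ n − 1 (equivalently, k ≥ log_{d+1}(n−1) − 1 when d ≥ 1). -/
/-- Vertices of the k-subdivision of K_n. -/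
def SubdivVert (n k : ℕ) : Type :=
  Fin n ⊕ ({ p : Fin n × Fin n // p.1 < p.2 } × Fin k)

instance (n k : ℕ) : Fintype (SubdivVert n k) :=
  inferInstanceAs (Fintype (Fin n ⊕ ({ p : Fin n × Fin n // p.1 < p.2 } × Fin k)))

instance (n k : ℕ) : DecidableEq (SubdivVert n k) :=
  inferInstanceAs (DecidableEq (Fin n ⊕ ({ p : Fin n × Fin n // p.1 < p.2 } × Fin k)))

def subAdj (n k : ℕ) : SubdivVert n k → SubdivVert n k → Prop
  | Sum.inl a, Sum.inl b => k = 0 ∧ a ≠ b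
  | Sum.inl a, Sum.inr (e, m) => (a = e.1.1 ∧ (m : ℕ) = 0) ∨ (a = e.1.2 ∧ (m : ℕ) = k - 1)
  | Sum.inr (e, m), Sum.inl a => (a = e.1.1 ∧ (m : ℕ) = 0) ∨ (a = e.1.2 ∧ (m : ℕ) = k - 1)
  | Sum.inr (e, m), Sum.inr (e', m') =>
      e = e' ∧ ((m : ℕ) + 1 = (m' : ℕ) ∨ (m' : ℕ) + 1 = (m : ℕ))

/-- The k-subdivision of the complete graph K_n. -/
def cliqueSubdivision (n k : ℕ) : SimpleGraph (SubdivVert n k) where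
  Adj := subAdj n k
  symm := by
    constructor
    rintro (a | ⟨e, m⟩) (b | ⟨e', m'⟩) h <;> simp only [subAdj] at h ⊢
    · exact ⟨h.1, h.2.symm⟩
    · exact h
    · exact h
    · exact ⟨h.1.symm, h.2.symm⟩
  loopless := by
    constructor
    rintro (a | ⟨e, m⟩) h <;> simp only [subAdj] at h
    · exact h.2 rfl
    · omega

namespace TwwAux

open Trigraph

variable {V : Type*} [DecidableEq V]
set_option linter.unusedSectionVars false

/-- Explicit contraction of `u, v` in a trigraph. -/
def contract (G : Trigraph V) (u v : V) (hu : u ∈ G.verts) (huv : u ≠ v) : Trigraph V where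
  verts := G.verts.erase v
  black x y := (x ≠ u ∧ y ≠ u ∧ G.black x y ∧ x ≠ v ∧ y ≠ v) ∨
    (x = u ∧ y ≠ u ∧ y ≠ v ∧ G.black u y ∧ G.black v y) ∨
    (y = u ∧ x ≠ u ∧ x ≠ v ∧ G.black u x ∧ G.black v x)
  red x y := (x ≠ u ∧ y ≠ u ∧ G.red x y ∧ x ≠ v ∧ y ≠ v) ∨
    (x = u ∧ y ≠ u ∧ y ≠ v ∧
      ((G.black u y ∨ G.red u y ∨ G.black v y ∨ G.red v y) ∧ ¬ (G.black u y ∧ G.black v y))) ∨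
    (y = u ∧ x ≠ u ∧ x ≠ v ∧
      ((G.black u x ∨ G.red u x ∨ G.black v x ∨ G.red v x) ∧ ¬ (G.black u x ∧ G.black v x)))
  black_symm := by
    intro x y h
    rcases h with ⟨h1, h2, h3, h4, h5⟩ | h | h
    · exact Or.inl ⟨h2, h1, G.black_symm _ _ h3, h5, h4⟩
    · exact Or.inr (Or.inr ⟨h.1, h.2.1, h.2.2.1, h.2.2.2⟩)
    · exact Or.inr (Or.inl ⟨h.1, h.2.1, h.2.2.1, h.2.2.2⟩)
  red_symm := by
    intro x y h
    rcases h with ⟨h1, h2, h3, h4, h5⟩ | h | h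
    · exact Or.inl ⟨h2, h1, G.red_symm _ _ h3, h5, h4⟩
    · exact Or.inr (Or.inr ⟨h.1, h.2.1, h.2.2.1, h.2.2.2⟩)
    · exact Or.inr (Or.inl ⟨h.1, h.2.1, h.2.2.1, h.2.2.2⟩)
  black_irrefl := by
    intro x h
    rcases h with ⟨_, _, h3, _, _⟩ | h | h
    · exact G.black_irrefl _ h3
    · exact h.2.1 h.1
    · exact h.2.1 h.1
  red_irrefl := by
    intro x h
    rcases h with ⟨_, _, h3, _, _⟩ | h | h
    · exact G.red_irrefl _ h3
    · exact h.2.1 h.1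
    · exact h.2.1 h.1
  black_red_disjoint := by
    intro x y hb hr
    rcases hb with ⟨h1, h2, h3, h4, h5⟩ | hb | hb
    · rcases hr with ⟨_, _, r3, _, _⟩ | hr | hr
      · exact G.black_red_disjoint _ _ h3 r3
      · exact h1 hr.1
      · exact h2 hr.1
    · rcases hr with ⟨r1, _, _, _, _⟩ | hr | hr
      · exact r1 hb.1
      · exact hr.2.2.2.2 ⟨hb.2.2.2.1, hb.2.2.2.2⟩
      · exact hb.2.1 hr.1
    · rcases hr with ⟨_, r2, _, _, _⟩ | hr | hr
      · exact r2 hb.1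
      · exact hb.2.1 hr.1
      · exact hr.2.2.2.2 ⟨hb.2.2.2.1, hb.2.2.2.2⟩
  black_mem := by
    intro x y h
    rcases h with ⟨_, _, h3, h4, h5⟩ | h | h
    · exact ⟨Finset.mem_erase.2 ⟨h4, (G.black_mem _ _ h3).1⟩,
        Finset.mem_erase.2 ⟨h5, (G.black_mem _ _ h3).2⟩⟩
    · exact ⟨h.1 ▸ Finset.mem_erase.2 ⟨h.1 ▸ huv, hu⟩,
        Finset.mem_erase.2 ⟨h.2.2.1, (G.black_mem _ _ h.2.2.2.1).2⟩⟩
    · exact ⟨Finset.mem_erase.2 ⟨h.2.2.1, (G.black_mem _ _ h.2.2.2.1).2⟩,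
        h.1 ▸ Finset.mem_erase.2 ⟨h.1 ▸ huv, hu⟩⟩
  red_mem := by
    intro x y h
    rcases h with ⟨_, _, h3, h4, h5⟩ | h | h
    · exact ⟨Finset.mem_erase.2 ⟨h4, (G.red_mem _ _ h3).1⟩,
        Finset.mem_erase.2 ⟨h5, (G.red_mem _ _ h3).2⟩⟩
    · refine ⟨h.1 ▸ Finset.mem_erase.2 ⟨h.1 ▸ huv, hu⟩, Finset.mem_erase.2 ⟨h.2.2.1, ?_⟩⟩
      rcases h.2.2.2.1 with hc | hc | hc | hc
      · exact (G.black_mem _ _ hc).2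
      · exact (G.red_mem _ _ hc).2
      · exact (G.black_mem _ _ hc).2
      · exact (G.red_mem _ _ hc).2
    · refine ⟨Finset.mem_erase.2 ⟨h.2.2.1, ?_⟩, h.1 ▸ Finset.mem_erase.2 ⟨h.1 ▸ huv, hu⟩⟩
      rcases h.2.2.2.1 with hc | hc | hc | hc
      · exact (G.black_mem _ _ hc).2
      · exact (G.red_mem _ _ hc).2
      · exact (G.black_mem _ _ hc).2
      · exact (G.red_mem _ _ hc).2

lemma contract_isContractionAt (G : Trigraph V) (u v : V) (hu : u ∈ G.verts)
    (hv : v ∈ G.verts) (huv : u ≠ v) :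
    IsContractionAt G (contract G u v hu huv) u v := by
  refine ⟨hu, hv, huv, rfl, ?_, ?_, ?_, ?_⟩
  · intro x y hx hy
    constructor
    · rintro (⟨_, _, h3, h4, h5⟩ | h | h)
      · exact ⟨h3, h4, h5⟩
      · exact absurd h.1 hx
      · exact absurd h.1 hy
    · rintro ⟨h1, h2, h3⟩
      exact Or.inl ⟨hx, hy, h1, h2, h3⟩
  · intro x y hx hy
    constructor
    · rintro (⟨_, _, h3, h4, h5⟩ | h | h)
      · exact ⟨h3, h4, h5⟩
      · exact absurd h.1 hx
      · exact absurd h.1 hy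
    · rintro ⟨h1, h2, h3⟩
      exact Or.inl ⟨hx, hy, h1, h2, h3⟩
  · intro x hxu hxv
    constructor
    · rintro (⟨h1, _⟩ | h | h)
      · exact absurd rfl h1
      · exact ⟨h.2.2.2.1, h.2.2.2.2⟩
      · exact absurd h.1 hxu
    · rintro ⟨h1, h2⟩
      exact Or.inr (Or.inl ⟨rfl, hxu, hxv, h1, h2⟩)
  · intro x hxu hxv
    constructor
    · rintro (⟨h1, _⟩ | h | h)
      · exact absurd rfl h1
      · exact h.2.2.2
      · exact absurd h.1 hxu
    · rintro h
      exact Or.inr (Or.inl ⟨rfl, hxu, hxv, h⟩)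

lemma redDeg_le_card [Fintype V] (G : Trigraph V) (x : V) : G.redDeg x ≤ Fintype.card V := by
  have h1 : {y | G.red x y}.ncard ≤ (Set.univ : Set V).ncard :=
    Set.ncard_le_ncard (Set.subset_univ _) Set.finite_univ
  simpa [Trigraph.redDeg, Set.ncard_univ] using h1

end TwwAux
namespace TwwAux

open Trigraph

variable {V : Type*} [DecidableEq V]
set_option linter.unusedSectionVars false

/-- One step: contract an arbitrary pair if at least two vertices remain. -/
noncomputable def stepT (G : Trigraph V) : Trigraph V :=
  if h : 1 < G.verts.card then
    contract G (Finset.one_lt_card.mp h).choose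
      (Finset.one_lt_card.mp h).choose_spec.2.choose
      (Finset.one_lt_card.mp h).choose_spec.1
      (Finset.one_lt_card.mp h).choose_spec.2.choose_spec.2
  else G

lemma stepT_spec (G : Trigraph V) (h : 1 < G.verts.card) :
    IsContraction G (stepT G) ∧ (stepT G).verts.card + 1 = G.verts.card := by
  have hh := Finset.one_lt_card.mp h
  set u := hh.choose with hu
  have h1 : u ∈ G.verts := hh.choose_spec.1
  set v := hh.choose_spec.2.choose with hv
  have h2 : v ∈ G.verts := hh.choose_spec.2.choose_spec.1
  have h3 : u ≠ v := hh.choose_spec.2.choose_spec.2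
  have hst : stepT G = contract G u v h1 h3 := by rw [stepT, dif_pos h]
  constructor
  · exact ⟨u, v, hst ▸ contract_isContractionAt G u v h1 h2 h3⟩
  · have : (stepT G).verts = G.verts.erase v := by rw [hst]; rfl
    rw [this, Finset.card_erase_of_mem h2]
    omega

lemma stepT_card_le (G : Trigraph V) : (stepT G).verts.card ≤ G.verts.card := by
  by_cases h : 1 < G.verts.card
  · have := (stepT_spec G h).2; omega
  · rw [stepT, dif_neg h]

lemma stepT_iter_card (G : Trigraph V) (m : ℕ) (hm : m + 1 ≤ G.verts.card) :
    (stepT^[m] G).verts.card = G.verts.card - m := by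
  induction m with
  | zero => simp
  | succ m ih =>
    have h1 : (stepT^[m] G).verts.card = G.verts.card - m := ih (by omega)
    have h2 : 1 < (stepT^[m] G).verts.card := by omega
    have := (stepT_spec (stepT^[m] G) h2).2
    rw [Function.iterate_succ_apply']
    omega

/-- Every trigraph admits a `d`-sequence for `d` equal to the number of vertices. -/
lemma hasSeq_card [Fintype V] (G : Trigraph V) (hGc : 1 ≤ G.verts.card) :
    G.HasSeq (Fintype.card V) := by
  refine ⟨fun i => stepT^[G.verts.card - i] G, by simp, ?_, ?_⟩
  · intro i h1 h2
    have hcard : (stepT^[G.verts.card - (i+1)] G).verts.card = i + 1 := by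
      rw [stepT_iter_card G _ (by omega)]; omega
    have hs := (stepT_spec (stepT^[G.verts.card - (i+1)] G) (by omega)).1
    have heq : G.verts.card - i = (G.verts.card - (i+1)) + 1 := by omega
    show Trigraph.IsContraction (stepT^[G.verts.card - (i+1)] G) (stepT^[G.verts.card - i] G)
    rw [heq, Function.iterate_succ_apply']
    exact hs
  · intro i _ _ x
    exact redDeg_le_card _ x

lemma hasSeq_mono (G : Trigraph V) {d d' : ℕ} (h : G.HasSeq d) (hdd : d ≤ d') :
    G.HasSeq d' := by
  obtain ⟨f, h1, h2, h3⟩ := h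
  exact ⟨f, h1, h2, fun i hi1 hi2 x => le_trans (h3 i hi1 hi2 x) hdd⟩

lemma hasSeq_of_tww_le [Fintype V] (G : Trigraph V) (hGc : 1 ≤ G.verts.card) {d : ℕ}
    (h : G.tww ≤ d) : G.HasSeq d := by
  have hne : {d | G.HasSeq d}.Nonempty := ⟨_, hasSeq_card G hGc⟩
  have := Nat.sInf_mem hne
  exact hasSeq_mono G this h

/-- The partition map: apply replacements `r i, r (i+1), …, r (N-1)` (fuel-based). -/
def piAux (r : ℕ → V → V) : ℕ → ℕ → V → V
  | 0, _ => id
  | m + 1, i => fun w => r i (piAux r m (i + 1) w)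

/-- The partition map at stage `i` of a sequence of length `N`. -/
def piF (r : ℕ → V → V) (N i : ℕ) : V → V := piAux r (N - i) i

lemma piF_self (r : ℕ → V → V) {N i : ℕ} (h : N ≤ i) : piF r N i = id := by
  have : N - i = 0 := by omega
  rw [piF, this]; rfl

lemma piF_succ (r : ℕ → V → V) {N i : ℕ} (h : i < N) (w : V) :
    piF r N i w = r i (piF r N (i + 1) w) := by
  have h1 : N - i = (N - (i + 1)) + 1 := by omega
  rw [piF, h1]
  rfl

/-- Downward induction from `N` to `1`. -/
lemma down_ind {N : ℕ} (P : ℕ → Prop) (h0 : P N)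
    (hs : ∀ i, 1 ≤ i → i < N → P (i + 1) → P i) : ∀ i, 1 ≤ i → i ≤ N → P i := by
  have key : ∀ m i, i = N - m → 1 ≤ i → i ≤ N → P i := by
    intro m
    induction m with
    | zero => intro i hi _ h2; have : i = N := by omega
              exact this ▸ h0
    | succ m ih =>
      intro i hi h1 h2
      by_cases hiN : i = N
      · exact hiN ▸ h0
      · exact hs i h1 (by omega) (ih (i + 1) (by omega) (by omega) (by omega))
  intro i h1 h2
  exact key (N - i) i (by omega) h1 h2

end TwwAux
namespace TwwAux

open Trigraph

variable {V : Type*} [DecidableEq V] [Fintype V]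
set_option linter.unusedSectionVars false

/-- The replacement map of step `i`. -/
def rF (u v : ℕ → V) (i : ℕ) : V → V := fun w => if w = v i then u i else w

section Seq

variable (H : SimpleGraph V) (f : ℕ → Trigraph V) (u v : ℕ → V)

lemma seq_verts_card
    (hfN : f (Fintype.card V) = H.toTrigraph)
    (hca : ∀ i, 1 ≤ i → i < Fintype.card V →
      Trigraph.IsContractionAt (f (i+1)) (f i) (u i) (v i)) :
    ∀ i, 1 ≤ i → i ≤ Fintype.card V → (f i).verts.card = i := by
  refine down_ind _ ?_ ?_
  · rw [hfN]
    simp [SimpleGraph.toTrigraph, SimpleGraph.toTrigraphOn]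
  · intro i h1 h2 ih
    obtain ⟨hu, hv, huv, hverts, -, -, -, -⟩ := hca i h1 h2
    rw [hverts, Finset.card_erase_of_mem hv, ih]
    omega

lemma seq_pi_mem
    (hfN : f (Fintype.card V) = H.toTrigraph)
    (hca : ∀ i, 1 ≤ i → i < Fintype.card V →
      Trigraph.IsContractionAt (f (i+1)) (f i) (u i) (v i)) :
    ∀ i, 1 ≤ i → i ≤ Fintype.card V →
      ∀ p, piF (rF u v) (Fintype.card V) i p ∈ (f i).verts := by
  refine down_ind _ ?_ ?_
  · intro p
    rw [piF_self _ le_rfl, hfN]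
    simp [SimpleGraph.toTrigraph, SimpleGraph.toTrigraphOn]
  · intro i h1 h2 ih p
    obtain ⟨hu, hv, huv, hverts, -, -, -, -⟩ := hca i h1 h2
    rw [piF_succ _ h2, hverts]
    have hmem := ih p
    rcases eq_or_ne (piF (rF u v) (Fintype.card V) (i+1) p) (v i) with hpv | hpv
    · simp only [rF, if_pos hpv]
      exact Finset.mem_erase.2 ⟨huv, hu⟩
    · simp only [rF, if_neg hpv]
      exact Finset.mem_erase.2 ⟨hpv, hmem⟩

lemma seq_inv
    (hfN : f (Fintype.card V) = H.toTrigraph)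
    (hca : ∀ i, 1 ≤ i → i < Fintype.card V →
      Trigraph.IsContractionAt (f (i+1)) (f i) (u i) (v i)) :
    ∀ i, 1 ≤ i → i ≤ Fintype.card V → ∀ p q,
      piF (rF u v) (Fintype.card V) i p ≠ piF (rF u v) (Fintype.card V) i q →
      ¬ (f i).red (piF (rF u v) (Fintype.card V) i p) (piF (rF u v) (Fintype.card V) i q) →
      (H.Adj p q ↔
        (f i).black (piF (rF u v) (Fintype.card V) i p) (piF (rF u v) (Fintype.card V) i q)) := by
  set N := Fintype.card V with hNdef
  set π := piF (rF u v) N with hπ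
  refine down_ind _ ?_ ?_
  · intro p q hne hnr
    have hid : π N = id := piF_self _ le_rfl
    rw [hid, hfN]
    simp only [id_eq] at hne ⊢
    simp [SimpleGraph.toTrigraph, SimpleGraph.toTrigraphOn]
  · intro i h1 h2 ih p q hne hnr
    obtain ⟨hu, hv, huv, hverts, hblack, hred, hbu, hru⟩ := hca i h1 h2
    have hmem := seq_pi_mem H f u v hfN hca
    have hxev : π i p ∈ ((f (i+1)).verts).erase (v i) := hverts ▸ hmem i h1 (by omega) p
    have hyev : π i q ∈ ((f (i+1)).verts).erase (v i) := hverts ▸ hmem i h1 (by omega) q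
    have hxv : π i p ≠ v i := (Finset.mem_erase.1 hxev).1
    have hyv : π i q ≠ v i := (Finset.mem_erase.1 hyev).1
    have hps : ∀ w, π i w = rF u v i (π (i+1) w) := fun w => piF_succ _ h2 w
    -- key handles the case where the first vertex maps to u i
    have key : ∀ p' q', π i p' = u i → π i q' ≠ u i → π i q' ≠ v i →
        ¬ (f i).red (π i p') (π i q') →
        (H.Adj p' q' ↔ (f i).black (π i p') (π i q')) := by
      intro p' q' hxu hyu hyv' hnr'
      set y := π i q' with hy
      have hy' : π (i+1) q' = y := by
        have h0 := (hps q').symm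
        simp only [rF] at h0
        by_cases hc : π (i+1) q' = v i
        · rw [if_pos hc] at h0
          exact absurd h0.symm hyu
        · rwa [if_neg hc] at h0
      have hx' : π (i+1) p' = u i ∨ π (i+1) p' = v i := by
        have h0 := (hps p').symm
        simp only [rF] at h0
        by_cases hc : π (i+1) p' = v i
        · exact Or.inr hc
        · rw [if_neg hc] at h0
          exact Or.inl (h0.trans hxu)
      rw [hxu] at hnr' ⊢
      have hrucl := hru y hyu hyv'
      have hnBIG : ((f (i+1)).black (u i) y ∨ (f (i+1)).red (u i) y ∨
          (f (i+1)).black (v i) y ∨ (f (i+1)).red (v i) y) →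
          ((f (i+1)).black (u i) y ∧ (f (i+1)).black (v i) y) := by
        intro hBIG
        by_contra hc
        exact hnr' (hrucl.2 ⟨hBIG, hc⟩)
      have hnr2 : ¬ (f (i+1)).red (π (i+1) p') y := by
        intro hr
        rcases hx' with hh | hh <;> rw [hh] at hr
        · exact (f (i+1)).black_red_disjoint _ _ (hnBIG (Or.inr (Or.inl hr))).1 hr
        · exact (f (i+1)).black_red_disjoint _ _
            (hnBIG (Or.inr (Or.inr (Or.inr hr)))).2 hr
      have hne2 : π (i+1) p' ≠ π (i+1) q' := by
        rw [hy']
        rcases hx' with hh | hh <;> rw [hh]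
        · exact fun hc => hyu hc.symm
        · exact fun hc => hyv' hc.symm
      have hih := ih p' q' hne2 (by rw [hy']; exact hnr2)
      rw [hy'] at hih
      have hbcl := hbu y hyu hyv'
      by_cases hB : (f (i+1)).black (u i) y ∧ (f (i+1)).black (v i) y
      · rw [hih, hbcl]
        rcases hx' with hh | hh <;> rw [hh]
        · exact ⟨fun _ => hB, fun _ => hB.1⟩
        · exact ⟨fun _ => hB, fun _ => hB.2⟩
      · have hnb : ¬ (f (i+1)).black (π (i+1) p') y := by
          intro hb
          rcases hx' with hh | hh <;> rw [hh] at hb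
          · exact hB (hnBIG (Or.inl hb))
          · exact hB (hnBIG (Or.inr (Or.inr (Or.inl hb))))
        rw [hih, hbcl]
        constructor
        · intro hb; exact absurd hb hnb
        · intro hb; exact absurd hb hB
    by_cases hxu : π i p = u i
    · by_cases hyu : π i q = u i
      · exact absurd (hxu.trans hyu.symm) hne
      · exact key p q hxu hyu hyv hnr
    · by_cases hyu : π i q = u i
      · have hnr' : ¬ (f i).red (π i q) (π i p) := fun hr => hnr ((f i).red_symm _ _ hr)
        have := key q p hyu hxu hxv hnr'
        rw [H.adj_comm]
        rw [this]
        exact ⟨fun hb => (f i).black_symm _ _ hb, fun hb => (f i).black_symm _ _ hb⟩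
      · -- neither endpoint is u i
        have hx' : π (i+1) p = π i p := by
          have h0 := (hps p).symm
          simp only [rF] at h0
          by_cases hc : π (i+1) p = v i
          · rw [if_pos hc] at h0; exact absurd h0.symm hxu
          · rw [if_neg hc] at h0; exact h0
        have hy' : π (i+1) q = π i q := by
          have h0 := (hps q).symm
          simp only [rF] at h0
          by_cases hc : π (i+1) q = v i
          · rw [if_pos hc] at h0; exact absurd h0.symm hyu
          · rw [if_neg hc] at h0; exact h0
        have hnr2 : ¬ (f (i+1)).red (π (i+1) p) (π (i+1) q) := by
          rw [hx', hy']
          intro hr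
          exact hnr ((hred _ _ hxu hyu).2 ⟨hr, hxv, hyv⟩)
        have hih := ih p q (by rw [hx', hy']; exact hne) hnr2
        rw [hx', hy'] at hih
        rw [hih, hblack _ _ hxu hyu]
        exact ⟨fun hb => ⟨hb, hxv, hyv⟩, fun hb => hb.1⟩

end Seq

end TwwAux
namespace TwwAux

open Trigraph

variable {V : Type*} [DecidableEq V] [Fintype V]
set_option linter.unusedSectionVars false

lemma seq_mixed_red (H : SimpleGraph V) (f : ℕ → Trigraph V) (u v : ℕ → V)
    (hfN : f (Fintype.card V) = H.toTrigraph)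
    (hca : ∀ i, 1 ≤ i → i < Fintype.card V →
      Trigraph.IsContractionAt (f (i+1)) (f i) (u i) (v i))
    (i : ℕ) (h1 : 1 ≤ i) (h2 : i ≤ Fintype.card V) (p q p' q' : V)
    (hp : piF (rF u v) (Fintype.card V) i p' = piF (rF u v) (Fintype.card V) i p)
    (hq : piF (rF u v) (Fintype.card V) i q' = piF (rF u v) (Fintype.card V) i q)
    (hne : piF (rF u v) (Fintype.card V) i p ≠ piF (rF u v) (Fintype.card V) i q)
    (hadj : H.Adj p q) (hnadj : ¬ H.Adj p' q') :
    (f i).red (piF (rF u v) (Fintype.card V) i p) (piF (rF u v) (Fintype.card V) i q) := by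
  by_contra hnr
  have hA := seq_inv H f u v hfN hca i h1 h2 p q hne hnr
  have hB := seq_inv H f u v hfN hca i h1 h2 p' q'
    (by rw [hp, hq]; exact hne) (by rw [hp, hq]; exact hnr)
  rw [hp, hq] at hB
  exact hnadj (hB.mpr (hA.mp hadj))

/-- Red neighborhood as a finset. -/
noncomputable def redNbr (T : Trigraph V) (x : V) : Finset V :=
  letI := Classical.decPred (T.red x)
  T.verts.filter (T.red x)

lemma redNbr_card_le (T : Trigraph V) (d : ℕ) (hdeg : T.RedDegLE d) (x : V) :
    (redNbr T x).card ≤ d := by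
  classical
  have hsub : {y | T.red x y} = ↑(redNbr T x) := by
    ext w
    simp only [redNbr, Finset.coe_filter, Set.mem_setOf_eq, Finset.mem_coe]
    exact ⟨fun h => ⟨(T.red_mem _ _ h).2, h⟩, fun h => h.2⟩
  have := hdeg x
  rwa [Trigraph.redDeg, hsub, Set.ncard_coe_finset] at this

lemma mem_redNbr (T : Trigraph V) {x y : V} (h : T.red x y) : y ∈ redNbr T x := by
  classical
  simp only [redNbr, Finset.mem_filter]
  exact ⟨(T.red_mem _ _ h).2, h⟩

/-- Generic counting step: if for every pair `c ≠ c'` in the same `P`-part the `Q`-image of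
`c` is the part itself or red-adjacent to it, then the next level has at most `(d+1)` times
more parts. -/
lemma step_count {A : Type*} [DecidableEq A] {W : Type*} (T : Trigraph V) (d : ℕ)
    (hdeg : T.RedDegLE d) (μ : W → V) (C : Finset A) (P Q : A → W)
    (hkey : ∀ c ∈ C, ∀ c' ∈ C, c ≠ c' → μ (P c) = μ (P c') → μ (Q c) ≠ μ (P c) →
      T.red (μ (P c)) (μ (Q c))) :
    (C.image fun c => μ (Q c)).card ≤ (d + 1) * (C.image fun c => μ (P c)).card := by
  classical
  set S := C.image fun c => μ (P c) with hS
  set Tf : V → Finset V := fun Y =>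
    if 1 < (C.filter fun c => μ (P c) = Y).card then insert Y (redNbr T Y)
    else (C.filter fun c => μ (P c) = Y).image fun c => μ (Q c) with hTf
  have hsub : (C.image fun c => μ (Q c)) ⊆ S.biUnion Tf := by
    intro y hy
    obtain ⟨c, hc, rfl⟩ := Finset.mem_image.1 hy
    have hYS : μ (P c) ∈ S := Finset.mem_image_of_mem _ hc
    refine Finset.mem_biUnion.2 ⟨μ (P c), hYS, ?_⟩
    by_cases h1 : 1 < (C.filter fun c' => μ (P c') = μ (P c)).card
    · rw [hTf]
      simp only [if_pos h1]
      by_cases heq : μ (Q c) = μ (P c)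
      · exact heq ▸ Finset.mem_insert_self _ _
      · obtain ⟨c', hc', hne⟩ := Finset.exists_mem_ne h1 c
        have hc'C := (Finset.mem_filter.1 hc').1
        have hc'P := (Finset.mem_filter.1 hc').2
        have hred := hkey c hc c' hc'C (fun hh => hne (hh ▸ rfl)) hc'P.symm heq
        exact Finset.mem_insert_of_mem (mem_redNbr T hred)
    · rw [hTf]
      simp only [if_neg h1]
      exact Finset.mem_image_of_mem _ (Finset.mem_filter.2 ⟨hc, rfl⟩)
  calc (C.image fun c => μ (Q c)).card ≤ (S.biUnion Tf).card := Finset.card_le_card hsub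
    _ ≤ ∑ Y ∈ S, (Tf Y).card := Finset.card_biUnion_le
    _ ≤ ∑ _Y ∈ S, (d + 1) := by
        refine Finset.sum_le_sum ?_
        intro Y _
        rw [hTf]
        by_cases h1 : 1 < (C.filter fun c => μ (P c) = Y).card
        · simp only [if_pos h1]
          calc (insert Y (redNbr T Y)).card ≤ (redNbr T Y).card + 1 :=
                Finset.card_insert_le _ _
            _ ≤ d + 1 := by have := redNbr_card_le T d hdeg Y; omega
        · simp only [if_neg h1]
          calc ((C.filter fun c => μ (P c) = Y).image fun c => μ (Q c)).card
              ≤ (C.filter fun c => μ (P c) = Y).card := Finset.card_image_le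
            _ ≤ d + 1 := by omega
  rw [Finset.sum_const, smul_eq_mul, mul_comm]

end TwwAux
namespace TwwAux

open Sum

/-- The `j`-th vertex on the subdivided path from `a` to `c` (`j = 0` is `a`,
`j = k+1` is `c`). -/
def pv (n k : ℕ) (a c : Fin n) (j : ℕ) : SubdivVert n k :=
  if _h0 : j = 0 then Sum.inl a
  else if _h1 : k + 1 ≤ j then Sum.inl c
  else if h : a < c then Sum.inr (⟨(a, c), h⟩, ⟨j - 1, by omega⟩)
  else if h' : c < a then Sum.inr (⟨(c, a), h'⟩, ⟨k - j, by omega⟩)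
  else Sum.inl a

variable {n k : ℕ}

lemma pv_zero (a c : Fin n) : pv n k a c 0 = Sum.inl a := by simp [pv]; rfl

lemma pv_last (a c : Fin n) : pv n k a c (k + 1) = Sum.inl c := by
  erw [pv, dif_neg (by omega : ¬ k + 1 = 0), dif_pos le_rfl]

lemma pv_eq_of_lt {a c : Fin n} (h : a < c) {j : ℕ} (h1 : 1 ≤ j) (h2 : j ≤ k) :
    pv n k a c j = Sum.inr (⟨(a, c), h⟩, ⟨j - 1, by omega⟩) := by
  erw [pv, dif_neg (by omega : ¬ j = 0), dif_neg (by omega : ¬ k + 1 ≤ j), dif_pos h]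

lemma pv_eq_of_gt {a c : Fin n} (h : c < a) {j : ℕ} (h1 : 1 ≤ j) (h2 : j ≤ k) :
    pv n k a c j = Sum.inr (⟨(c, a), h⟩, ⟨k - j, by omega⟩) := by
  erw [pv, dif_neg (by omega : ¬ j = 0), dif_neg (by omega : ¬ k + 1 ≤ j),
    dif_neg (by exact fun hh => absurd (hh.trans h) (lt_irrefl a)), dif_pos h]

lemma pv_ne_inl {a c : Fin n} (hac : a ≠ c) {j : ℕ} (h1 : 1 ≤ j) (h2 : j ≤ k)
    (z : Fin n) : pv n k a c j ≠ Sum.inl z := by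
  rcases lt_or_gt_of_ne hac with h | h
  · rw [pv_eq_of_lt h h1 h2]; exact fun hh => by injection hh
  · rw [pv_eq_of_gt h h1 h2]; exact fun hh => by injection hh

lemma adj_iff {x y : SubdivVert n k} :
    (cliqueSubdivision n k).Adj x y ↔ subAdj n k x y := Iff.rfl

lemma adj_pv_succ {a c : Fin n} (hac : a ≠ c) {j : ℕ} (h2 : j ≤ k) (hk : 1 ≤ k) :
    (cliqueSubdivision n k).Adj (pv n k a c j) (pv n k a c (j + 1)) := by
  rw [adj_iff]
  rcases lt_or_gt_of_ne hac with h | h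
  · rcases Nat.eq_or_lt_of_le h2 with hjk | hjk
    · -- j = k, next is inl c
      subst hjk
      rcases Nat.eq_zero_or_pos j with h0 | h0
      · omega
      · rw [pv_eq_of_lt h h0 le_rfl, pv_last]
        exact Or.inr ⟨rfl, by simp <;> omega⟩
    · rcases Nat.eq_zero_or_pos j with h0 | h0
      · subst h0
        rw [pv_zero, pv_eq_of_lt h le_rfl (by omega)]
        exact Or.inl ⟨rfl, by simp⟩
      · rw [pv_eq_of_lt h h0 (by omega), pv_eq_of_lt h (by omega) (by omega)]
        exact ⟨rfl, Or.inl (by simp <;> omega)⟩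
  · rcases Nat.eq_or_lt_of_le h2 with hjk | hjk
    · subst hjk
      rcases Nat.eq_zero_or_pos j with h0 | h0
      · omega
      · rw [pv_eq_of_gt h h0 le_rfl, pv_last]
        exact Or.inl ⟨rfl, by simp <;> omega⟩
    · rcases Nat.eq_zero_or_pos j with h0 | h0
      · subst h0
        rw [pv_zero, pv_eq_of_gt h le_rfl (by omega)]
        exact Or.inr ⟨rfl, by simp <;> omega⟩
      · rw [pv_eq_of_gt h h0 (by omega), pv_eq_of_gt h (by omega) (by omega)]
        exact ⟨rfl, Or.inr (by simp <;> omega)⟩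

end TwwAux
namespace TwwAux

open Sum

variable {n k : ℕ}

lemma inr_eq_iff {e e' : {p : Fin n × Fin n // p.1 < p.2}} {m m' : Fin k} :
    (Sum.inr (e, m) : SubdivVert n k) = Sum.inr (e', m') ↔ e = e' ∧ m = m' := by
  constructor
  · intro h
    injection h with h2
    exact ⟨congrArg Prod.fst h2, congrArg Prod.snd h2⟩
  · rintro ⟨rfl, rfl⟩; rfl

lemma nonadj_inl_inl (hk : 1 ≤ k) (b c : Fin n) :
    ¬ (cliqueSubdivision n k).Adj (Sum.inl b) (Sum.inl c) := by
  erw [adj_iff]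
  intro h
  simp only [subAdj] at h
  omega

lemma nonadj_inl_pv1 (hk : 1 ≤ k) {a c b : Fin n} (hac : a ≠ c) (hba : b ≠ a) (hbc : b ≠ c) :
    ¬ (cliqueSubdivision n k).Adj (Sum.inl b) (pv n k a c 1) := by
  erw [adj_iff]
  rcases lt_or_gt_of_ne hac with h | h
  · rw [pv_eq_of_lt h le_rfl hk]
    rintro (⟨hb, -⟩ | ⟨hb, -⟩)
    · exact hba hb
    · exact hbc hb
  · rw [pv_eq_of_gt h le_rfl hk]
    rintro (⟨hb, -⟩ | ⟨hb, -⟩)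
    · exact hbc hb
    · exact hba hb

lemma nbr_pv1 (hk : 1 ≤ k) {a c : Fin n} (hac : a ≠ c) (w : SubdivVert n k)
    (hadj : (cliqueSubdivision n k).Adj w (pv n k a c 1)) :
    w = Sum.inl a ∨ w = pv n k a c 2 := by
  rw [adj_iff] at hadj
  rcases lt_or_gt_of_ne hac with h | h
  · rw [pv_eq_of_lt h le_rfl hk] at hadj
    rcases w with b | ⟨e2, m2⟩
    · rcases hadj with ⟨hb, -⟩ | ⟨hb, hm⟩
      · exact Or.inl (by rw [hb])
      · -- second endpoint: 0 = k - 1, so k = 1 and pv a c 2 = inl c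
        simp only at hm
        have hk1 : k = 1 := by omega
        subst hk1
        right
        rw [show (2:ℕ) = 1 + 1 from rfl, pv_last, hb]
    · obtain ⟨he, hm⟩ := hadj
      simp only at hm
      rcases hm with hm | hm
      · omega
      · -- m2 = 1, so k ≥ 2 and w = pv a c 2
        have hm2 : (m2 : ℕ) = 1 := by omega
        have hk2 : 2 ≤ k := by have := m2.isLt; omega
        right
        erw [pv_eq_of_lt h (by omega) hk2, inr_eq_iff]
        exact ⟨he, Fin.ext (show (m2:ℕ) = 2 - 1 by omega)⟩
  · rw [pv_eq_of_gt h le_rfl hk] at hadj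
    rcases w with b | ⟨e2, m2⟩
    · rcases hadj with ⟨hb, hm⟩ | ⟨hb, -⟩
      · simp only at hm
        have hk1 : k = 1 := by omega
        subst hk1
        right
        rw [show (2:ℕ) = 1 + 1 from rfl, pv_last, hb]
      · exact Or.inl (by rw [hb])
    · obtain ⟨he, hm⟩ := hadj
      simp only at hm
      rcases hm with hm | hm
      · have hk2 : 2 ≤ k := by omega
        have hm2 : (m2 : ℕ) = k - 2 := by omega
        right
        erw [pv_eq_of_gt h (by omega) hk2, inr_eq_iff]
        exact ⟨he, Fin.ext (show (m2:ℕ) = k - 2 by omega)⟩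
      · have := m2.isLt; omega

lemma nonadj_cross (hk : 1 ≤ k) {j : ℕ} (h1 : 1 ≤ j) (h2 : j ≤ k) {a c c' : Fin n}
    (hac : a ≠ c) (hac' : a ≠ c') (hcc' : c ≠ c') :
    ¬ (cliqueSubdivision n k).Adj (pv n k a c' j) (pv n k a c (j + 1)) := by
  rw [adj_iff]
  rcases Nat.eq_or_lt_of_le h2 with hjk | hjk
  · -- j = k : second vertex is inl c
    subst hjk
    rw [pv_last]
    rcases lt_or_gt_of_ne hac' with h | h
    · rw [pv_eq_of_lt h h1 le_rfl]
      rintro (⟨hb, -⟩ | ⟨hb, -⟩)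
      · exact hac hb.symm
      · exact hcc' hb
    · rw [pv_eq_of_gt h h1 le_rfl]
      rintro (⟨hb, -⟩ | ⟨hb, -⟩)
      · exact hcc' hb
      · exact hac hb.symm
  · -- j + 1 ≤ k : both internal, distinct edges
    have hj1 : j + 1 ≤ k := hjk
    rintro hadj
    rcases lt_or_gt_of_ne hac' with h | h <;> rcases lt_or_gt_of_ne hac with h' | h'
    · rw [pv_eq_of_lt h h1 (by omega), pv_eq_of_lt h' (by omega) hj1] at hadj
      obtain ⟨he, -⟩ := hadj
      simp only [Subtype.mk.injEq, Prod.mk.injEq] at he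
      exact hcc' he.2.symm
    · rw [pv_eq_of_lt h h1 (by omega), pv_eq_of_gt h' (by omega) hj1] at hadj
      obtain ⟨he, -⟩ := hadj
      simp only [Subtype.mk.injEq, Prod.mk.injEq] at he
      exact hac he.1
    · rw [pv_eq_of_gt h h1 (by omega), pv_eq_of_lt h' (by omega) hj1] at hadj
      obtain ⟨he, -⟩ := hadj
      simp only [Subtype.mk.injEq, Prod.mk.injEq] at he
      exact hac' he.1.symm
    · rw [pv_eq_of_gt h h1 (by omega), pv_eq_of_gt h' (by omega) hj1] at hadj
      obtain ⟨he, -⟩ := hadj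
      simp only [Subtype.mk.injEq, Prod.mk.injEq] at he
      exact hcc' he.1.symm

lemma pv_inj (hk : 1 ≤ k) {j j' : ℕ} (h1 : 1 ≤ j) (h2 : j ≤ k + 1) (h1' : 1 ≤ j')
    (h2' : j' ≤ k + 1) {a c c' : Fin n} (hac : a ≠ c) (hac' : a ≠ c')
    (heq : pv n k a c j = pv n k a c' j') : c = c' ∧ j = j' := by
  rcases Nat.eq_or_lt_of_le h2 with hjk | hjk <;> rcases Nat.eq_or_lt_of_le h2' with hjk' | hjk'
  · subst hjk; subst hjk'
    rw [pv_last, pv_last] at heq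
    exact ⟨by injection heq, rfl⟩
  · subst hjk
    rw [pv_last] at heq
    exact absurd heq.symm (pv_ne_inl hac' h1' (by omega) c)
  · subst hjk'
    rw [pv_last] at heq
    exact absurd heq (pv_ne_inl hac h1 (by omega) c')
  · have hj : j ≤ k := by omega
    have hj' : j' ≤ k := by omega
    rcases lt_or_gt_of_ne hac with h | h <;> rcases lt_or_gt_of_ne hac' with h' | h'
    · erw [pv_eq_of_lt h h1 hj, pv_eq_of_lt h' h1' hj', inr_eq_iff] at heq
      obtain ⟨hE, hM⟩ := heq
      have hE' : ((a, c) : Fin n × Fin n) = (a, c') := congrArg Subtype.val hE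
      have hMv : j - 1 = j' - 1 := congrArg Fin.val hM
      exact ⟨congrArg Prod.snd hE', by omega⟩
    · erw [pv_eq_of_lt h h1 hj, pv_eq_of_gt h' h1' hj', inr_eq_iff] at heq
      obtain ⟨hE, -⟩ := heq
      have hE' : ((a, c) : Fin n × Fin n) = (c', a) := congrArg Subtype.val hE
      exact absurd (congrArg Prod.snd hE').symm hac
    · erw [pv_eq_of_gt h h1 hj, pv_eq_of_lt h' h1' hj', inr_eq_iff] at heq
      obtain ⟨hE, -⟩ := heq
      have hE' : ((c, a) : Fin n × Fin n) = (a, c') := congrArg Subtype.val hE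
      exact absurd (congrArg Prod.snd hE') hac'
    · erw [pv_eq_of_gt h h1 hj, pv_eq_of_gt h' h1' hj', inr_eq_iff] at heq
      obtain ⟨hE, hM⟩ := heq
      have hE' : ((c, a) : Fin n × Fin n) = (c', a) := congrArg Subtype.val hE
      have hMv : k - j = k - j' := congrArg Fin.val hM
      exact ⟨congrArg Prod.fst hE', by omega⟩

end TwwAux
open TwwAux

/-- if the `k`-subdivision of `K_n` (with `k ≥ 1`, `n ≥ 2`) has twin-width at
most `d`, then `(d+1)^(k+1) ≥ n - 1`. -/
theorem clique_subdivision_lower_bound (d k n : ℕ) (hk : 1 ≤ k) (hn : 2 ≤ n)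
    (h : Trigraph.tww (cliqueSubdivision n k).toTrigraph ≤ d) :
    n - 1 ≤ (d + 1) ^ (k + 1) := by
  classical
  have hcard : ((cliqueSubdivision n k).toTrigraph).verts.card = Fintype.card (SubdivVert n k) :=
    Finset.card_univ
  have hNn : n ≤ Fintype.card (SubdivVert n k) := by
    have h1 : Fintype.card (SubdivVert n k) =
        Fintype.card (Fin n) + Fintype.card ({ p : Fin n × Fin n // p.1 < p.2 } × Fin k) :=
      Fintype.card_sum
    rw [Fintype.card_fin] at h1
    omega
  have hseq : ((cliqueSubdivision n k).toTrigraph).HasSeq d := hasSeq_of_tww_le _ (by omega) h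
  obtain ⟨f, hf0, hstepc, hdeg⟩ := hseq
  rw [hcard] at hf0 hstepc hdeg
  -- choose the contraction pairs
  have hex : ∀ i, 1 ≤ i → i < Fintype.card (SubdivVert n k) →
      ∃ uv : SubdivVert n k × SubdivVert n k, Trigraph.IsContractionAt (f (i+1)) (f i) uv.1 uv.2 := by
    intro i h1 h2
    obtain ⟨u, v, huv⟩ := hstepc i h1 h2
    exact ⟨(u, v), huv⟩
  set uf : ℕ → SubdivVert n k := fun i =>
    if hcond : 1 ≤ i ∧ i < Fintype.card (SubdivVert n k) then (hex i hcond.1 hcond.2).choose.1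
    else Sum.inl ⟨0, by omega⟩ with huf
  set vf : ℕ → SubdivVert n k := fun i =>
    if hcond : 1 ≤ i ∧ i < Fintype.card (SubdivVert n k) then (hex i hcond.1 hcond.2).choose.2
    else Sum.inl ⟨0, by omega⟩ with hvf
  have hca : ∀ i, 1 ≤ i → i < Fintype.card (SubdivVert n k) →
      Trigraph.IsContractionAt (f (i+1)) (f i) (uf i) (vf i) := by
    intro i h1 h2
    rw [huf, hvf]
    simp only [dif_pos (And.intro h1 h2)]
    erw [dif_pos (And.intro h1 h2), dif_pos (And.intro h1 h2)]
    exact (hex i h1 h2).choose_spec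
  set π : ℕ → SubdivVert n k → SubdivVert n k := piF (rF uf vf) (Fintype.card (SubdivVert n k)) with hπ
  have hmem : ∀ i, 1 ≤ i → i ≤ Fintype.card (SubdivVert n k) → ∀ p : SubdivVert n k, π i p ∈ (f i).verts :=
    seq_pi_mem (cliqueSubdivision n k) f uf vf hf0 hca
  have hvc : ∀ i, 1 ≤ i → i ≤ Fintype.card (SubdivVert n k) → (f i).verts.card = i :=
    seq_verts_card (cliqueSubdivision n k) f uf vf hf0 hca
  have hMR : ∀ i, 1 ≤ i → i ≤ Fintype.card (SubdivVert n k) → ∀ p q p' q' : SubdivVert n k,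
      π i p' = π i p → π i q' = π i q → π i p ≠ π i q → (cliqueSubdivision n k).Adj p q → ¬ (cliqueSubdivision n k).Adj p' q' →
      (f i).red (π i p) (π i q) := seq_mixed_red (cliqueSubdivision n k) f uf vf hf0 hca
  -- the "bad" predicate and the critical time t
  set Bad : ℕ → Prop := fun i => ∃ (a : Fin n) (p : SubdivVert n k), p ≠ Sum.inl a ∧ π i p = π i (Sum.inl a)
    with hBadDef
  have hBad1 : Bad 1 := by
    refine ⟨⟨0, by omega⟩, Sum.inl ⟨1, by omega⟩, ?_, ?_⟩
    · intro hh
      have := Sum.inl.inj hh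
      have := congrArg Fin.val this
      simp at this
    · have hc1 := hvc 1 le_rfl (by omega)
      have hm1 := hmem 1 le_rfl (by omega)
      exact Finset.card_le_one.1 (by omega) _ (hm1 _) _ (hm1 _)
  have hBadN : ¬ Bad (Fintype.card (SubdivVert n k)) := by
    rintro ⟨a, p, hne, heq⟩
    rw [hπ, piF_self _ le_rfl] at heq
    exact hne heq
  set t := Nat.findGreatest Bad (Fintype.card (SubdivVert n k)) with ht
  have htB : Bad t := Nat.findGreatest_spec (by omega : 1 ≤ Fintype.card (SubdivVert n k)) hBad1
  have ht1 : 1 ≤ t := Nat.le_findGreatest (by omega) hBad1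
  have htN' : t ≤ Fintype.card (SubdivVert n k) := Nat.findGreatest_le _
  have htN : t < Fintype.card (SubdivVert n k) := by
    rcases Nat.eq_or_lt_of_le htN' with hh | hh
    · exact absurd (hh ▸ htB) hBadN
    · exact hh
  have hnBad : ¬ Bad (t + 1) :=
    Nat.findGreatest_is_greatest (show t < t + 1 by omega)
      (show t + 1 ≤ Fintype.card (SubdivVert n k) by omega)
  have hsingle : ∀ (c : Fin n) (p : SubdivVert n k), π (t+1) p = π (t+1) (Sum.inl c) → p = Sum.inl c := by
    intro c p hp
    by_contra hne
    exact hnBad ⟨c, p, hne, hp⟩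
  have hr_eq : ∀ p, π t p = if π (t+1) p = vf t then uf t else π (t+1) p := by
    intro p
    rw [hπ, piF_succ _ htN]
    rfl
  obtain ⟨a, p0, hp0ne, hp0eq⟩ := htB
  -- the merged part is uf t
  have hXu : π t (Sum.inl a) = uf t := by
    have h1 := hr_eq p0
    have h2 := hr_eq (Sum.inl a)
    have hne' : π (t+1) p0 ≠ π (t+1) (Sum.inl a) := fun hh => hp0ne (hsingle a p0 hh)
    by_cases hc2 : π (t+1) (Sum.inl a) = vf t
    · rw [if_pos hc2] at h2; exact h2
    · rw [if_neg hc2] at h2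
      by_cases hc1 : π (t+1) p0 = vf t
      · rw [if_pos hc1] at h1
        rw [← hp0eq]
        exact h1
      · rw [if_neg hc1] at h1
        exact absurd (by rw [← h1, ← h2, hp0eq]) hne'
  have hfiber_uv : ∀ p, π t p = uf t → π (t+1) p = uf t ∨ π (t+1) p = vf t := by
    intro p hp
    have h1 := hr_eq p
    by_cases hc : π (t+1) p = vf t
    · exact Or.inr hc
    · rw [if_neg hc] at h1
      exact Or.inl (h1 ▸ hp)
  have hfiber2 : ∀ b : Fin n, b ≠ a → π t (Sum.inl b) = uf t →
      ∀ p, π t p = uf t → p = Sum.inl a ∨ p = Sum.inl b := by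
    intro b hba hb p hp
    have hpa := hfiber_uv _ hXu
    have hpb := hfiber_uv _ hb
    have hpp := hfiber_uv _ hp
    have hab : π (t+1) (Sum.inl a) ≠ π (t+1) (Sum.inl b) := by
      intro hh
      exact hba (Sum.inl.inj (hsingle b (Sum.inl a) hh)).symm
    rcases hpp with hA | hA
    · rcases hpa with hB | hB
      · exact Or.inl (hsingle a p (by rw [hA, hB]))
      · rcases hpb with hC | hC
        · exact Or.inr (hsingle b p (by rw [hA, hC]))
        · exact absurd (hB.trans hC.symm) hab
    · rcases hpa with hB | hB
      · rcases hpb with hC | hC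
        · exact absurd (hB.trans hC.symm) hab
        · exact Or.inr (hsingle b p (by rw [hA, hC]))
      · exact Or.inl (hsingle a p (by rw [hA, hB]))
  -- injectivity of parts of branch vertices away from uf t
  have hinj0 : ∀ c c' : Fin n, π t (Sum.inl c) = π t (Sum.inl c') →
      π t (Sum.inl c) ≠ uf t → c = c' := by
    intro c c' hcc hcu
    have h1 := hr_eq (Sum.inl c)
    have h2 := hr_eq (Sum.inl c')
    by_cases hd1 : π (t+1) (Sum.inl c) = vf t
    · rw [if_pos hd1] at h1; exact absurd h1 hcu
    · rw [if_neg hd1] at h1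
      by_cases hd2 : π (t+1) (Sum.inl c') = vf t
      · rw [if_pos hd2] at h2; rw [hcc] at hcu; exact absurd h2 hcu
      · rw [if_neg hd2] at h2
        exact Sum.inl.inj (hsingle c' (Sum.inl c) (by rw [← h1, ← h2]; exact hcc))
  -- common machinery for the counting argument
  have hdegt : (f t).RedDegLE d := hdeg t ht1 (le_of_lt htN)
  have chain : ∀ (C : Finset (Fin n)), (∀ c ∈ C, c ≠ a) → ∀ (B : Finset (SubdivVert n k)),
      (∀ c ∈ C, π t (pv n k a c 1) ∈ B) →
      (C.image fun c => π t (pv n k a c (k+1))).card ≤ (d+1)^k * B.card := by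
    intro C hCa B hB
    have level : ∀ j, 1 ≤ j → j ≤ k + 1 →
        (C.image fun c => π t (pv n k a c j)).card ≤ (d+1)^(j-1) * B.card := by
      intro j
      induction j with
      | zero => intro h1 _; omega
      | succ j ih =>
        intro h1 h2
        rcases Nat.eq_zero_or_pos j with rfl | hj
        · simp only [Nat.add_sub_cancel, pow_zero, one_mul]
          refine Finset.card_le_card ?_
          intro y hy
          obtain ⟨c, hc, rfl⟩ := Finset.mem_image.1 hy
          exact hB c hc
        · have hprev := ih (by omega) (by omega)
          have hkey : ∀ c ∈ C, ∀ c' ∈ C, c ≠ c' →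
              π t (pv n k a c j) = π t (pv n k a c' j) →
              π t (pv n k a c (j+1)) ≠ π t (pv n k a c j) →
              (f t).red (π t (pv n k a c j)) (π t (pv n k a c (j+1))) := by
            intro c hc c' hc' hcc' hPP hQP
            exact hMR t ht1 htN.le (pv n k a c j) (pv n k a c (j+1))
              (pv n k a c' j) (pv n k a c (j+1)) hPP.symm rfl hQP.symm
              (adj_pv_succ (Ne.symm (hCa c hc)) (by omega) hk)
              (nonadj_cross hk hj (by omega) (Ne.symm (hCa c hc)) (Ne.symm (hCa c' hc')) hcc')
          have hstep : (C.image fun c => π t (pv n k a c (j+1))).card ≤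
              (d+1) * (C.image fun c => π t (pv n k a c j)).card :=
            step_count (f t) d hdegt (π t) C
              (fun c => pv n k a c j) (fun c => pv n k a c (j+1)) hkey
          have hmono : (d+1) * (C.image fun c => π t (pv n k a c j)).card ≤
              (d+1) * ((d+1)^(j-1) * B.card) := Nat.mul_le_mul_left _ hprev
          have heqp : (d+1) * ((d+1)^(j-1) * B.card) = (d+1)^(j+1-1) * B.card := by
            rw [← mul_assoc, ← pow_succ']
            have : j - 1 + 1 = j + 1 - 1 := by omega
            rw [this]
          omega
    have := level (k+1) (by omega) le_rfl
    simpa using this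
  have hpow1 : 1 ≤ (d+1)^k := Nat.one_le_pow _ _ (by omega)
  have hpows : (d+1)^(k+1) = (d+1)^k * d + (d+1)^k := by ring
  have hErase : ((Finset.univ.erase a) : Finset (Fin n)).card = n - 1 := by
    rw [Finset.card_erase_of_mem (Finset.mem_univ a), Finset.card_univ, Fintype.card_fin]
  have hadjbase : ∀ c : Fin n, c ≠ a → (cliqueSubdivision n k).Adj (Sum.inl a) (pv n k a c 1) := by
    intro c hca'
    have := adj_pv_succ (n := n) (Ne.symm hca') (show 0 ≤ k by omega) hk
    rwa [pv_zero] at this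
  by_cases hcaseA : ∃ b : Fin n, b ≠ a ∧ π t (Sum.inl b) = uf t
  -- CASE A : two branch vertices in the merged part
  · obtain ⟨b, hba, hbX⟩ := hcaseA
    have hfib := hfiber2 b hba hbX
    set C : Finset (Fin n) := (Finset.univ.erase a).erase b with hC
    have hCa : ∀ c ∈ C, c ≠ a := fun c hc => (Finset.mem_erase.1 (Finset.mem_erase.1 hc).2).1
    have hCb : ∀ c ∈ C, c ≠ b := fun c hc => (Finset.mem_erase.1 hc).1
    have hB : ∀ c ∈ C, π t (pv n k a c 1) ∈ redNbr (f t) (uf t) := by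
      intro c hc
      have hca' := hCa c hc
      have hbc := hCb c hc
      have hne1 : π t (pv n k a c 1) ≠ uf t := by
        intro hh
        rcases hfib _ hh with h' | h' <;> exact pv_ne_inl (Ne.symm hca') le_rfl hk _ h'
      have hred := hMR t ht1 htN.le (Sum.inl a) (pv n k a c 1) (Sum.inl b) (pv n k a c 1)
        (hbX.trans hXu.symm) rfl (by rw [hXu]; exact fun hh => hne1 hh.symm)
        (hadjbase c hca') (nonadj_inl_pv1 hk (Ne.symm hca') hba (Ne.symm (hCb c hc)))
      rw [hXu] at hred
      exact mem_redNbr _ hred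
    have hchain := chain C hCa _ hB
    have hBcard : (redNbr (f t) (uf t)).card ≤ d := redNbr_card_le _ d hdegt _
    have hsub : (Finset.univ.erase a).image (fun c => π t (Sum.inl c)) ⊆
        insert (uf t) (C.image fun c => π t (pv n k a c (k+1))) := by
      intro y hy
      obtain ⟨c, hc, rfl⟩ := Finset.mem_image.1 hy
      by_cases hcb : c = b
      · subst hcb; rw [hbX]; exact Finset.mem_insert_self _ _
      · refine Finset.mem_insert_of_mem (Finset.mem_image.2 ⟨c, Finset.mem_erase.2 ⟨hcb, hc⟩, ?_⟩)
        rw [pv_last]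
    have hinj : Set.InjOn (fun c => π t (Sum.inl c))
        ((Finset.univ.erase a : Finset (Fin n)) : Set (Fin n)) := by
      intro c hc c' hc' hcc
      simp only [Finset.coe_erase, Set.mem_diff, Set.mem_singleton_iff, Finset.coe_univ,
        Set.mem_univ, true_and] at hc hc'
      simp only at hcc
      by_cases hcu : π t (Sum.inl c) = uf t
      · have h1 := hfib _ hcu
        have h2 := hfib _ (hcc ▸ hcu)
        rcases h1 with h1 | h1
        · exact absurd (Sum.inl.inj h1) hc
        · rcases h2 with h2 | h2
          · exact absurd (Sum.inl.inj h2) hc'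
          · rw [Sum.inl.inj h1, Sum.inl.inj h2]
      · exact hinj0 c c' hcc hcu
    have h1 : ((Finset.univ.erase a).image (fun c => π t (Sum.inl c))).card = n - 1 := by
      rw [Finset.card_image_of_injOn hinj, hErase]
    have h2 := Finset.card_le_card hsub
    have h3 := Finset.card_insert_le (uf t) (C.image fun c => π t (pv n k a c (k+1)))
    have h5 : (d+1)^k * (redNbr (f t) (uf t)).card ≤ (d+1)^k * d :=
      Nat.mul_le_mul_left _ hBcard
    omega
  -- CASE B : only one branch vertex in the merged part
  · push_neg at hcaseA
    have honly : ∀ c : Fin n, π t (Sum.inl c) = uf t → c = a := by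
      intro c hc
      by_contra hne
      exact (hcaseA c hne) hc
    have hzX : π t p0 = uf t := hp0eq.trans hXu
    have hinj : Set.InjOn (fun c => π t (Sum.inl c))
        ((Finset.univ.erase a : Finset (Fin n)) : Set (Fin n)) := by
      intro c hc c' hc' hcc
      simp only [Finset.coe_erase, Set.mem_diff, Set.mem_singleton_iff, Finset.coe_univ,
        Set.mem_univ, true_and] at hc hc'
      simp only at hcc
      have hcu : π t (Sum.inl c) ≠ uf t := fun hh => hc (honly c hh)
      exact hinj0 c c' hcc hcu
    by_cases hbad : ∃ c₀ : Fin n, c₀ ≠ a ∧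
        ∀ w, π t w = uf t → w = Sum.inl a ∨ w = pv n k a c₀ 2
    -- CASE B-bad
    · obtain ⟨c₀, hc0a, hfib0⟩ := hbad
      have hz2 : π t (pv n k a c₀ 2) = uf t := by
        rcases hfib0 p0 hzX with hh | hh
        · exact absurd hh hp0ne
        · rw [← hh]; exact hzX
      set C : Finset (Fin n) := (Finset.univ.erase a).erase c₀ with hC
      have hCa : ∀ c ∈ C, c ≠ a := fun c hc => (Finset.mem_erase.1 (Finset.mem_erase.1 hc).2).1
      have hCc0 : ∀ c ∈ C, c ≠ c₀ := fun c hc => (Finset.mem_erase.1 hc).1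
      have hpvne : pv n k a c₀ 2 ≠ Sum.inl a := by
        rcases Nat.eq_or_lt_of_le hk with hk1 | hk2
        · rw [show (2:ℕ) = k + 1 by omega, pv_last]
          exact fun hh => hc0a (Sum.inl.inj hh)
        · exact pv_ne_inl (Ne.symm hc0a) (by omega) (by omega) a
      have hB : ∀ c ∈ C, π t (pv n k a c 1) ∈ redNbr (f t) (uf t) := by
        intro c hc
        have hca' := hCa c hc
        have hcc0 := hCc0 c hc
        have hne1 : π t (pv n k a c 1) ≠ uf t := by
          intro hh
          rcases hfib0 _ hh with h' | h'
          · exact pv_ne_inl (Ne.symm hca') le_rfl hk a h'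
          · have := pv_inj hk le_rfl (by omega) (by omega) (by omega)
              (Ne.symm hca') (Ne.symm hc0a) h'
            omega
        have hnadj : ¬ (cliqueSubdivision n k).Adj (pv n k a c₀ 2) (pv n k a c 1) := by
          intro hadj
          rcases nbr_pv1 hk (Ne.symm hca') _ hadj with h' | h'
          · exact hpvne h'
          · have := pv_inj hk (by omega) (by omega) (by omega) (by omega)
              (Ne.symm hc0a) (Ne.symm hca') h'
            exact hcc0 this.1.symm
        have hred := hMR t ht1 htN.le (Sum.inl a) (pv n k a c 1) (pv n k a c₀ 2) (pv n k a c 1)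
          (hz2.trans hXu.symm) rfl (by rw [hXu]; exact fun hh => hne1 hh.symm)
          (hadjbase c hca') hnadj
        rw [hXu] at hred
        exact mem_redNbr _ hred
      have hchain := chain C hCa _ hB
      have hBcard : (redNbr (f t) (uf t)).card ≤ d := redNbr_card_le _ d hdegt _
      have hsub : (Finset.univ.erase a).image (fun c => π t (Sum.inl c)) ⊆
          insert (π t (Sum.inl c₀)) (C.image fun c => π t (pv n k a c (k+1))) := by
        intro y hy
        obtain ⟨c, hc, rfl⟩ := Finset.mem_image.1 hy
        by_cases hcc0 : c = c₀
        · subst hcc0; exact Finset.mem_insert_self _ _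
        · refine Finset.mem_insert_of_mem
            (Finset.mem_image.2 ⟨c, Finset.mem_erase.2 ⟨hcc0, hc⟩, ?_⟩)
          rw [pv_last]
      have h1 : ((Finset.univ.erase a).image (fun c => π t (Sum.inl c))).card = n - 1 := by
        rw [Finset.card_image_of_injOn hinj, hErase]
      have h2 := Finset.card_le_card hsub
      have h3 := Finset.card_insert_le (π t (Sum.inl c₀))
        (C.image fun c => π t (pv n k a c (k+1)))
      have h5 : (d+1)^k * (redNbr (f t) (uf t)).card ≤ (d+1)^k * d :=
        Nat.mul_le_mul_left _ hBcard
      omega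
    -- CASE B-good
    · have hbad' : ∀ c : Fin n, c ≠ a →
          ∃ w : SubdivVert n k, π t w = uf t ∧ ¬ (w = Sum.inl a ∨ w = pv n k a c 2) := by
        intro c hca'
        by_contra hcon
        refine hbad ⟨c, hca', fun w hw => ?_⟩
        by_contra hor
        exact hcon ⟨w, hw, hor⟩
      set C : Finset (Fin n) := Finset.univ.erase a with hC
      have hCa : ∀ c ∈ C, c ≠ a := fun c hc => (Finset.mem_erase.1 hc).1
      have hB : ∀ c ∈ C, π t (pv n k a c 1) ∈ insert (uf t) (redNbr (f t) (uf t)) := by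
        intro c hc
        have hca' := hCa c hc
        by_cases hh : π t (pv n k a c 1) = uf t
        · rw [hh]; exact Finset.mem_insert_self _ _
        · obtain ⟨w, hw1, hw23⟩ := hbad' c hca'
          have hnadj : ¬ (cliqueSubdivision n k).Adj w (pv n k a c 1) := by
            intro hadj
            exact hw23 (nbr_pv1 hk (Ne.symm hca') _ hadj)
          have hred := hMR t ht1 htN.le (Sum.inl a) (pv n k a c 1) w (pv n k a c 1)
            (hw1.trans hXu.symm) rfl (by rw [hXu]; exact fun h2 => hh h2.symm)
            (hadjbase c hca') hnadj
          rw [hXu] at hred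
          exact Finset.mem_insert_of_mem (mem_redNbr _ hred)
      have hchain := chain C hCa _ hB
      have hBcard : (insert (uf t) (redNbr (f t) (uf t))).card ≤ d + 1 := by
        have := redNbr_card_le (f t) d hdegt (uf t)
        have := Finset.card_insert_le (uf t) (redNbr (f t) (uf t))
        omega
      have him : (C.image fun c => π t (pv n k a c (k+1))) =
          C.image (fun c => π t (Sum.inl c)) :=
        Finset.image_congr (fun c _ => by rw [pv_last])
      have h1 : (C.image (fun c => π t (Sum.inl c))).card = n - 1 := by
        rw [Finset.card_image_of_injOn hinj, hErase]
      rw [him, h1] at hchain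
      have h5 : (d+1)^k * (insert (uf t) (redNbr (f t) (uf t))).card ≤ (d+1)^k * (d+1) :=
        Nat.mul_le_mul_left _ hBcard
      have h6 : (d+1)^k * (d+1) = (d+1)^(k+1) := (pow_succ _ _).symm
      omega
end
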